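/- arXiv:2206.13120 — 5 statements merged into one kernel-verified Lean document; each statement's English description precedes it below -/
import Mathlib

section
/- Let W be a random variable with values in [0,∞) with cdf H, and let H_1(t) = P(W ≤ t, W = X) for another random variable X. Suppose for each n, η_1^{(n)},…,η_n^{(n)} are mutually independent [0,1]-valued random variables and (W_i) are iid copies of W, with sup_{t≥0} |(1/n)∑_{i=1}^n E[1_{W_i ≤ t} η_i^{(n)}] − H_1(t)| → 0 as n → ∞. Then sup_{t≥0} |(1/n)∑_{i=1}^n 1_{W_i ≤ t} η_i^{(n)} − H_1(t)| → 0 almost surely as n → ∞. -/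
open MeasureTheory ProbabilityTheory Filter Set Function
open scoped Topology ENNReal



lemma aux_integrable_bdd {Ω : Type*} [MeasurableSpace Ω] (P : Measure Ω) [IsProbabilityMeasure P]
    {f : Ω → ℝ} (hf : Measurable f) (C : ℝ) (h : ∀ ω, |f ω| ≤ C) : Integrable f P :=
  Integrable.mono' (integrable_const C) hf.aestronglyMeasurable
    (Filter.Eventually.of_forall fun ω => h ω)

lemma exp_le_one_add_sq {x : ℝ} (hx : |x| ≤ 1) : Real.exp x ≤ 1 + x + x ^ 2 := by
  have h := Real.exp_bound hx (n := 3) (by norm_num)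
  have hsum : ∑ m ∈ Finset.range 3, x ^ m / m.factorial = 1 + x + x ^ 2 / 2 := by
    norm_num [Finset.sum_range_succ, Nat.factorial]
  rw [hsum] at h
  have h3 : |x| ^ 3 ≤ x ^ 2 := by
    calc |x| ^ 3 = |x| ^ 2 * |x| := by ring
    _ ≤ |x| ^ 2 * 1 := by nlinarith [abs_nonneg x, sq_nonneg (|x|)]
    _ = x ^ 2 := by rw [mul_one, sq_abs]
  norm_num [Nat.factorial] at h
  have h2 := abs_le.1 h
  nlinarith [sq_nonneg x, h2.1, h2.2]

lemma mgf_le_exp_sq {Ω : Type*} [MeasurableSpace Ω] (P : Measure Ω) [IsProbabilityMeasure P]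
    {Y : Ω → ℝ} (hY : Measurable Y) (hb : ∀ ω, |Y ω| ≤ 1) (h0 : ∫ ω, Y ω ∂P = 0)
    {t : ℝ} (ht : |t| ≤ 1) : mgf Y P t ≤ Real.exp (t ^ 2) := by
  have hbY2 : ∀ ω, |Y ω ^ 2| ≤ 1 := fun ω => by
    rw [abs_pow, sq_abs]; nlinarith [hb ω, abs_nonneg (Y ω), sq_abs (Y ω)]
  have hint1 : Integrable (fun ω => t * Y ω) P :=
    aux_integrable_bdd P (hY.const_mul t) |t| fun ω => by
      rw [abs_mul]; nlinarith [abs_nonneg t, abs_nonneg (Y ω), hb ω]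
  have hint2 : Integrable (fun ω => t ^ 2 * Y ω ^ 2) P :=
    aux_integrable_bdd P ((hY.pow_const 2).const_mul _) (t^2) fun ω => by
      rw [abs_mul, abs_pow, sq_abs]
      nlinarith [sq_nonneg t, hbY2 ω, abs_nonneg (Y ω ^ 2), sq_nonneg (Y ω)]
  have hexp_int : Integrable (fun ω => Real.exp (t * Y ω)) P := by
    refine aux_integrable_bdd P (Real.measurable_exp.comp (hY.const_mul t)) (Real.exp 1)
      fun ω => ?_
    rw [abs_of_pos (Real.exp_pos _)]
    refine Real.exp_le_exp.2 ?_
    calc t * Y ω ≤ |t * Y ω| := le_abs_self _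
    _ = |t| * |Y ω| := abs_mul _ _
    _ ≤ 1 := by nlinarith [abs_nonneg t, abs_nonneg (Y ω), hb ω]
  have hle : ∀ ω, Real.exp (t * Y ω) ≤ 1 + t * Y ω + t ^ 2 * Y ω ^ 2 := fun ω => by
    have h1 : |t * Y ω| ≤ 1 := by
      rw [abs_mul]; nlinarith [abs_nonneg t, abs_nonneg (Y ω), hb ω]
    have h2 := exp_le_one_add_sq h1
    nlinarith [h2]
  have hY2int : Integrable (fun ω => Y ω ^ 2) P :=
    aux_integrable_bdd P (hY.pow_const 2) 1 hbY2
  have hY2le : ∫ ω, Y ω ^ 2 ∂P ≤ 1 := by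
    calc ∫ ω, Y ω ^ 2 ∂P ≤ ∫ _, (1:ℝ) ∂P := integral_mono hY2int (integrable_const 1)
          (fun ω => by nlinarith [hb ω, abs_nonneg (Y ω), sq_abs (Y ω)])
    _ = 1 := by simp
  calc mgf Y P t = ∫ ω, Real.exp (t * Y ω) ∂P := rfl
  _ ≤ ∫ ω, (1 + t * Y ω + t ^ 2 * Y ω ^ 2) ∂P :=
      integral_mono hexp_int (((integrable_const 1).add hint1).add hint2) hle
  _ = 1 + t * ∫ ω, Y ω ∂P + t ^ 2 * ∫ ω, Y ω ^ 2 ∂P := by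
      have hadd : Integrable (fun ω => 1 + t * Y ω) P := (integrable_const 1).add hint1
      rw [integral_add hadd hint2, integral_add (integrable_const 1) hint1, integral_const,
        integral_const_mul, integral_const_mul]
      simp
  _ ≤ 1 + t ^ 2 := by
      rw [h0, mul_zero, add_zero]
      nlinarith [sq_nonneg t, hY2le]
  _ ≤ Real.exp (t ^ 2) := by linarith [Real.add_one_le_exp (t ^ 2)]





lemma row_tail {Ω : Type*} [MeasurableSpace Ω] (P : Measure Ω) [IsProbabilityMeasure P]
    (Y : ℕ → Ω → ℝ) (hmeas : ∀ i, Measurable (Y i))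
    (hind : iIndepFun Y P)
    (hb : ∀ i ω, |Y i ω| ≤ 1) (h0 : ∀ i, ∫ ω, Y i ω ∂P = 0) (n : ℕ)
    {ε : ℝ} (hε : 0 < ε) (hε2 : ε ≤ 2) :
    (P {ω | (n:ℝ) * ε ≤ ∑ i ∈ Finset.range n, Y i ω}).toReal
      ≤ Real.exp (-(n:ℝ) * ε ^ 2 / 4) := by
  set t : ℝ := ε / 2 with ht_def
  have ht0 : 0 ≤ t := by positivity
  have ht1 : |t| ≤ 1 := by rw [abs_of_nonneg ht0]; linarith
  have hSmeas : Measurable (fun ω => ∑ i ∈ Finset.range n, Y i ω) :=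
    Finset.measurable_sum _ fun i _ => hmeas i
  have hint : Integrable (fun ω => Real.exp (t * ∑ i ∈ Finset.range n, Y i ω)) P := by
    refine aux_integrable_bdd P (Real.measurable_exp.comp (hSmeas.const_mul t)) (Real.exp n)
      fun ω => ?_
    rw [abs_of_pos (Real.exp_pos _)]
    refine Real.exp_le_exp.2 ?_
    have hsb : ∑ i ∈ Finset.range n, Y i ω ≤ n := by
      calc ∑ i ∈ Finset.range n, Y i ω ≤ ∑ i ∈ Finset.range n, (1:ℝ) :=
        Finset.sum_le_sum fun i _ => (abs_le.1 (hb i ω)).2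
      _ = n := by simp
    have habs : |∑ i ∈ Finset.range n, Y i ω| ≤ n := by
      rw [abs_le]
      constructor
      · calc -(n:ℝ) = ∑ i ∈ Finset.range n, (-1:ℝ) := by simp
        _ ≤ ∑ i ∈ Finset.range n, Y i ω :=
          Finset.sum_le_sum fun i _ => (abs_le.1 (hb i ω)).1
      · exact hsb
    calc t * ∑ i ∈ Finset.range n, Y i ω ≤ |t * ∑ i ∈ Finset.range n, Y i ω| := le_abs_self _
    _ = |t| * |∑ i ∈ Finset.range n, Y i ω| := abs_mul _ _
    _ ≤ 1 * n := mul_le_mul ht1 habs (abs_nonneg _) zero_le_one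
    _ = n := one_mul _
  have hcher := measure_ge_le_exp_mul_mgf (μ := P)
    (X := fun ω => ∑ i ∈ Finset.range n, Y i ω) ((n:ℝ) * ε) ht0 hint
  have hmgf : mgf (fun ω => ∑ i ∈ Finset.range n, Y i ω) P t ≤ Real.exp ((n:ℝ) * t ^ 2) := by
    have hsum_eq : (fun ω => ∑ i ∈ Finset.range n, Y i ω) = ∑ i ∈ Finset.range n, Y i := by
      ext ω; simp [Finset.sum_apply]
    rw [hsum_eq, hind.mgf_sum hmeas]
    calc ∏ i ∈ Finset.range n, mgf (Y i) P t
        ≤ ∏ _i ∈ Finset.range n, Real.exp (t ^ 2) :=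
          Finset.prod_le_prod (fun i _ => mgf_nonneg)
            (fun i _ => mgf_le_exp_sq P (hmeas i) (hb i) (h0 i) ht1)
    _ = Real.exp ((n:ℝ) * t ^ 2) := by
        rw [Finset.prod_const, ← Real.exp_nat_mul]; simp
  calc (P {ω | (n:ℝ) * ε ≤ ∑ i ∈ Finset.range n, Y i ω}).toReal
      ≤ Real.exp (-t * ((n:ℝ) * ε)) * mgf (fun ω => ∑ i ∈ Finset.range n, Y i ω) P t := hcher
  _ ≤ Real.exp (-t * ((n:ℝ) * ε)) * Real.exp ((n:ℝ) * t ^ 2) := by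
      exact mul_le_mul_of_nonneg_left hmgf (le_of_lt (Real.exp_pos _))
  _ = Real.exp (-(n:ℝ) * ε ^ 2 / 4) := by
      rw [← Real.exp_add]
      congr 1
      rw [ht_def]; ring

lemma tri_slln {Ω : Type*} [MeasurableSpace Ω] (P : Measure Ω) [IsProbabilityMeasure P]
    (Z : ℕ → ℕ → Ω → ℝ) (hmeas : ∀ n i, Measurable (Z n i))
    (hb : ∀ n i ω, Z n i ω ∈ Icc (0:ℝ) 1)
    (hind : ∀ n, iIndepFun (Z n) P) :
    ∀ᵐ ω ∂P, Tendsto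
      (fun n : ℕ => (n:ℝ)⁻¹ * ∑ i ∈ Finset.range n, (Z n i ω - ∫ ω', Z n i ω' ∂P))
      atTop (𝓝 0) := by
  set Y : ℕ → ℕ → Ω → ℝ := fun n i ω => Z n i ω - ∫ ω', Z n i ω' ∂P with hY_def
  have hZint : ∀ n i, Integrable (Z n i) P := fun n i =>
    aux_integrable_bdd P (hmeas n i) 1 fun ω => abs_le.2 ⟨by linarith [(hb n i ω).1], (hb n i ω).2⟩
  have hEmem : ∀ n i, (∫ ω', Z n i ω' ∂P) ∈ Icc (0:ℝ) 1 := fun n i => by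
    constructor
    · exact integral_nonneg fun ω => (hb n i ω).1
    · calc ∫ ω', Z n i ω' ∂P ≤ ∫ _, (1:ℝ) ∂P :=
        integral_mono (hZint n i) (integrable_const 1) fun ω => (hb n i ω).2
      _ = 1 := by simp
  have hYmeas : ∀ n i, Measurable (Y n i) := fun n i => (hmeas n i).sub measurable_const
  have hYb : ∀ n i ω, |Y n i ω| ≤ 1 := fun n i ω => by
    rw [hY_def, abs_le]
    simp only
    constructor <;> [linarith [(hb n i ω).1, (hEmem n i).2]; linarith [(hb n i ω).2, (hEmem n i).1]]
  have hY0 : ∀ n i, ∫ ω, Y n i ω ∂P = 0 := fun n i => by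
    rw [hY_def]
    rw [integral_sub (hZint n i) (integrable_const _), integral_const]
    simp
  have hYind : ∀ n, iIndepFun (Y n) P := fun n => by
    have := (hind n).comp (fun i => fun x => x - ∫ ω', Z n i ω' ∂P)
      (fun i => measurable_id.sub measurable_const)
    exact this
  have hYnegind : ∀ n, iIndepFun (fun i ω => -(Y n i ω)) P := fun n => by
    have := (hYind n).comp (fun _ => fun x : ℝ => -x) (fun _ => measurable_neg)
    exact this
  -- tail events
  set A : ℕ → ℕ → Set Ω := fun m n =>
    {ω | ((m:ℝ)+1)⁻¹ ≤ |(n:ℝ)⁻¹ * ∑ i ∈ Finset.range n, Y n i ω|} with hA_def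
  have hbound : ∀ m n, P (A m n) ≤ ENNReal.ofReal (2 * Real.exp (-(n:ℝ) * ((m:ℝ)+1)⁻¹ ^ 2 / 4)) := by
    intro m n
    set ε : ℝ := ((m:ℝ)+1)⁻¹ with hε_def
    have hε0 : 0 < ε := by positivity
    have hε2 : ε ≤ 2 := by
      rw [hε_def]
      have h0m : (0:ℝ) ≤ (m:ℝ) := Nat.cast_nonneg m
      have : (1:ℝ) ≤ (m:ℝ) + 1 := by linarith
      calc ((m:ℝ)+1)⁻¹ ≤ 1 := inv_le_one_of_one_le₀ this
      _ ≤ 2 := one_le_two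
    rcases Nat.eq_zero_or_pos n with hn | hn
    · subst hn
      calc P (A m 0) ≤ 1 := prob_le_one
      _ ≤ ENNReal.ofReal (2 * Real.exp (-((0:ℕ):ℝ) * ε ^ 2 / 4)) := by
          norm_num
    · have hsub : A m n ⊆ {ω | (n:ℝ) * ε ≤ ∑ i ∈ Finset.range n, Y n i ω}
          ∪ {ω | (n:ℝ) * ε ≤ ∑ i ∈ Finset.range n, -(Y n i ω)} := by
        intro ω hω
        have hn0 : (0:ℝ) < n := by exact_mod_cast hn
        rw [hA_def, mem_setOf_eq] at hω
        have : (n:ℝ) * ε ≤ |∑ i ∈ Finset.range n, Y n i ω| := by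
          rw [abs_mul, abs_inv, abs_of_pos hn0] at hω
          calc (n:ℝ) * ε ≤ (n:ℝ) * ((n:ℝ)⁻¹ * |∑ i ∈ Finset.range n, Y n i ω|) :=
            mul_le_mul_of_nonneg_left hω (le_of_lt hn0)
          _ = |∑ i ∈ Finset.range n, Y n i ω| := by field_simp
        rcases abs_le.1 (le_refl (|∑ i ∈ Finset.range n, Y n i ω|)) with ⟨h1, h2⟩
        rcases le_or_gt ((n:ℝ) * ε) (∑ i ∈ Finset.range n, Y n i ω) with h | h
        · exact Or.inl h
        · refine Or.inr ?_
          rw [mem_setOf_eq, Finset.sum_neg_distrib]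
          rcases abs_cases (∑ i ∈ Finset.range n, Y n i ω) with ⟨heq, _⟩ | ⟨heq, _⟩
          · linarith [this, heq]
          · linarith [this, heq]
      calc P (A m n) ≤ P ({ω | (n:ℝ) * ε ≤ ∑ i ∈ Finset.range n, Y n i ω}
            ∪ {ω | (n:ℝ) * ε ≤ ∑ i ∈ Finset.range n, -(Y n i ω)}) := measure_mono hsub
      _ ≤ P {ω | (n:ℝ) * ε ≤ ∑ i ∈ Finset.range n, Y n i ω}
            + P {ω | (n:ℝ) * ε ≤ ∑ i ∈ Finset.range n, -(Y n i ω)} := measure_union_le _ _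
      _ ≤ ENNReal.ofReal (Real.exp (-(n:ℝ) * ε ^ 2 / 4))
            + ENNReal.ofReal (Real.exp (-(n:ℝ) * ε ^ 2 / 4)) := by
          have h1 := row_tail P (Y n) (hYmeas n) (hYind n) (hYb n) (hY0 n) n hε0 hε2
          have h2 := row_tail P (fun i ω => -(Y n i ω)) (fun i => (hYmeas n i).neg)
            (hYnegind n) (fun i ω => by rw [abs_neg]; exact hYb n i ω)
            (fun i => by rw [integral_neg, hY0 n i, neg_zero]) n hε0 hε2
          gcongr
          · exact (ENNReal.le_ofReal_iff_toReal_le (measure_ne_top _ _)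
              (le_of_lt (Real.exp_pos _))).2 h1
          · exact (ENNReal.le_ofReal_iff_toReal_le (measure_ne_top _ _)
              (le_of_lt (Real.exp_pos _))).2 h2
      _ = ENNReal.ofReal (2 * Real.exp (-(n:ℝ) * ε ^ 2 / 4)) := by
          rw [← ENNReal.ofReal_add (le_of_lt (Real.exp_pos _)) (le_of_lt (Real.exp_pos _))]
          ring_nf
  have hsum : ∀ m : ℕ, ∑' n, P (A m n) ≠ ∞ := by
    intro m
    set q : ℝ := ((m:ℝ)+1)⁻¹ ^ 2 / 4 with hq_def
    have hq0 : 0 < q := by positivity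
    have hsummable : Summable (fun n : ℕ => 2 * Real.exp (-(n:ℝ) * ((m:ℝ)+1)⁻¹ ^ 2 / 4)) := by
      have heq : (fun n : ℕ => 2 * Real.exp (-(n:ℝ) * ((m:ℝ)+1)⁻¹ ^ 2 / 4))
          = fun n : ℕ => 2 * Real.exp (-q) ^ n := by
        ext n
        rw [← Real.exp_nat_mul]
        congr 1
        rw [hq_def]; ring
      rw [heq]
      exact (summable_geometric_of_lt_one (le_of_lt (Real.exp_pos _))
        (Real.exp_lt_one_iff.2 (by linarith))).mul_left 2
    have := calc ∑' n, P (A m n)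
        ≤ ∑' n : ℕ, ENNReal.ofReal (2 * Real.exp (-(n:ℝ) * ((m:ℝ)+1)⁻¹ ^ 2 / 4)) :=
          ENNReal.tsum_le_tsum (hbound m)
      _ = ENNReal.ofReal (∑' n : ℕ, 2 * Real.exp (-(n:ℝ) * ((m:ℝ)+1)⁻¹ ^ 2 / 4)) :=
          (ENNReal.ofReal_tsum_of_nonneg (fun n => by positivity) hsummable).symm
      _ < ∞ := ENNReal.ofReal_lt_top
    exact ne_of_lt this
  have hae : ∀ᵐ ω ∂P, ∀ m : ℕ, ∀ᶠ n in atTop, ω ∉ A m n := by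
    rw [ae_all_iff]
    intro m
    exact ae_eventually_notMem (hsum m)
  filter_upwards [hae] with ω hω
  rw [NormedAddCommGroup.tendsto_nhds_zero]
  intro δ hδ
  obtain ⟨m, hm⟩ := exists_nat_one_div_lt hδ
  filter_upwards [hω m] with n hn
  rw [Real.norm_eq_abs]
  have hn' : ¬ (((m:ℝ)+1)⁻¹ ≤ |(n:ℝ)⁻¹ * ∑ i ∈ Finset.range n, Y n i ω|) := hn
  push_neg at hn'
  calc |(n:ℝ)⁻¹ * ∑ i ∈ Finset.range n, Y n i ω| < ((m:ℝ)+1)⁻¹ := hn'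
  _ = 1 / ((m:ℝ)+1) := (one_div _).symm
  _ < δ := hm



lemma exists_grid (ν : Measure ℝ) [IsProbabilityMeasure ν]
    (hneg : ∀ t : ℝ, t < 0 → ν (Iic t) = 0) {ε : ℝ} (hε : 0 < ε) :
    ∃ (K : ℕ) (τ : ℕ → ℝ), 0 < K ∧ τ 0 = -1 ∧ Monotone τ ∧
      (∀ k, 1 ≤ k → k ≤ K - 1 → 0 ≤ τ k) ∧
      (∀ k, 1 ≤ k → k ≤ K - 1 → (ν (Ioo (τ (k-1)) (τ k))).toReal ≤ ε) ∧
      (ν (Ioi (τ (K-1)))).toReal ≤ ε := by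
  classical
  set F : ℝ → ℝ := fun t => ((cdf ν) t) with hF_def
  have hFmono : Monotone F := monotone_cdf ν
  have hFtop : Tendsto F atTop (𝓝 1) := tendsto_cdf_atTop ν
  have hFeq : ∀ t, F t = (ν (Iic t)).toReal := fun t => cdf_eq_real ν t
  have hFneg : ∀ t : ℝ, t < 0 → F t = 0 := fun t ht => by rw [hFeq, hneg t ht]; simp
  set K : ℕ := ⌈1/ε⌉₊ with hK_def
  have hKpos : 0 < K := Nat.ceil_pos.2 (by positivity)
  have hKε : 1 ≤ (K:ℝ) * ε := by
    have := Nat.le_ceil (1/ε)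
    calc (1:ℝ) = (1/ε) * ε := by field_simp
    _ ≤ (K:ℝ) * ε := by
        apply mul_le_mul_of_nonneg_right _ (le_of_lt hε)
        exact this
  rcases eq_or_lt_of_le (Nat.succ_le_of_lt hKpos) with hK1 | hK2
  · -- K = 1 : trivial grid
    refine ⟨K, fun _ => -1, hKpos, rfl, monotone_const, ?_, ?_, ?_⟩
    · intro k hk1 hk2
      omega
    · intro k hk1 hk2
      omega
    · have h1 : (K:ℝ) = 1 := by rw [← hK1]; norm_num
      have : (ν (Ioi (-1:ℝ))).toReal ≤ 1 := by
        calc (ν (Ioi (-1:ℝ))).toReal ≤ (ν univ).toReal :=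
          ENNReal.toReal_mono (measure_ne_top _ _) (measure_mono (subset_univ _))
        _ = 1 := by simp
      calc (ν (Ioi (-1:ℝ))).toReal ≤ 1 := this
      _ ≤ ε := by nlinarith
  · -- K ≥ 2
    set S : ℕ → Set ℝ := fun k => {t | (k:ℝ) * ε ≤ F t} with hS_def
    have hmem : ∀ k : ℕ, 1 ≤ k → k ≤ K - 1 →
        ((S k).Nonempty ∧ BddBelow (S k) ∧ S k ⊆ Ici 0) := by
      intro k hk1 hk2
      have hkε1 : (k:ℝ) * ε < 1 := by
        have hkK : (k:ℝ) < 1/ε := by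
          have : k < K := by omega
          exact_mod_cast Nat.lt_ceil.1 (by omega)
        calc (k:ℝ) * ε < (1/ε) * ε := mul_lt_mul_of_pos_right hkK hε
        _ = 1 := by field_simp
      have hsub : S k ⊆ Ici 0 := by
        intro t ht
        rw [mem_Ici]
        by_contra hc
        push_neg at hc
        have hF0 : F t = 0 := hFneg t hc
        rw [hS_def] at ht
        simp only [mem_setOf_eq, hF0] at ht
        have hkc : (1:ℝ) ≤ (k:ℝ) := (Nat.one_le_cast (α := ℝ)).2 hk1
        nlinarith
      have hne : (S k).Nonempty := by
        have : ∀ᶠ t in atTop, F t ∈ Ioi ((k:ℝ)*ε) := hFtop.eventually (Ioi_mem_nhds hkε1)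
        obtain ⟨t, ht⟩ := this.exists
        exact ⟨t, show (k:ℝ) * ε ≤ F t from le_of_lt ht⟩
      exact ⟨hne, ⟨0, fun x hx => hsub hx⟩, hsub⟩
    set τ : ℕ → ℝ := fun k => if k = 0 then -1 else sInf (S (min k (K-1))) with hτ_def
    have hτnn : ∀ k, 1 ≤ k → 0 ≤ τ k := by
      intro k hk
      rw [hτ_def]
      simp only [if_neg (by omega : ¬ k = 0)]
      obtain ⟨hne, hbd, hsub⟩ := hmem (min k (K-1)) (by omega) (by omega)
      exact le_csInf hne fun x hx => hsub hx
    have hQa : ∀ k, 1 ≤ k → k ≤ K - 1 → (k:ℝ) * ε ≤ F (sInf (S k)) := by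
      intro k hk1 hk2
      obtain ⟨hne, hbd, hsub⟩ := hmem k hk1 hk2
      have hcl : sInf (S k) ∈ closure (S k) := csInf_mem_closure hne hbd
      have hrc : ContinuousWithinAt F (Ici (sInf (S k))) (sInf (S k)) :=
        (cdf ν).right_continuous' (sInf (S k))
      have hSI : S k ⊆ Ici (sInf (S k)) := fun x hx => csInf_le hbd hx
      have hT : Tendsto F (𝓝[S k] (sInf (S k))) (𝓝 (F (sInf (S k)))) :=
        hrc.tendsto.mono_left (nhdsWithin_mono _ hSI)
      have hnb : (𝓝[S k] (sInf (S k))).NeBot := mem_closure_iff_nhdsWithin_neBot.1 hcl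
      exact ge_of_tendsto hT (eventually_mem_nhdsWithin.mono fun x hx => hx)
    have hQb : ∀ k, 1 ≤ k → k ≤ K - 1 →
        ν (Iio (sInf (S k))) ≤ ENNReal.ofReal ((k:ℝ) * ε) := by
      intro k hk1 hk2
      obtain ⟨hne, hbd, hsub⟩ := hmem k hk1 hk2
      set σ : ℝ := sInf (S k) with hσ
      have hunion : Iio σ = ⋃ j : ℕ, Iic (σ - ((j:ℝ)+1)⁻¹) := by
        ext x
        simp only [mem_Iio, mem_iUnion, mem_Iic]
        constructor
        · intro hx
          obtain ⟨j, hj⟩ := exists_nat_one_div_lt (by linarith : 0 < σ - x)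
          exact ⟨j, by rw [one_div] at hj; linarith⟩
        · rintro ⟨j, hj⟩
          have : (0:ℝ) < ((j:ℝ)+1)⁻¹ := by positivity
          linarith
      have hmono : Monotone (fun j : ℕ => Iic (σ - ((j:ℝ)+1)⁻¹)) := by
        intro a b hab
        apply Iic_subset_Iic.2
        have hab' : (a:ℝ) + 1 ≤ (b:ℝ) + 1 := by
          have := (Nat.cast_le (α := ℝ)).2 hab
          linarith
        have : ((b:ℝ)+1)⁻¹ ≤ ((a:ℝ)+1)⁻¹ := inv_anti₀ (by positivity) hab'
        linarith
      have hT := tendsto_measure_iUnion_atTop (μ := ν) hmono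
      rw [← hunion] at hT
      refine le_of_tendsto' hT fun j => ?_
      have hnotin : σ - ((j:ℝ)+1)⁻¹ ∉ S k := by
        intro hin
        have := csInf_le hbd hin
        have hp : (0:ℝ) < ((j:ℝ)+1)⁻¹ := by positivity
        rw [← hσ] at this
        linarith
      have hlt : F (σ - ((j:ℝ)+1)⁻¹) < (k:ℝ) * ε := by
        by_contra hc
        push_neg at hc
        exact hnotin hc
      rw [hFeq] at hlt
      exact (ENNReal.le_ofReal_iff_toReal_le (measure_ne_top _ _)
        (by positivity)).2 (le_of_lt hlt)
    refine ⟨K, τ, hKpos, by rw [hτ_def]; simp, ?_, fun k hk1 _ => hτnn k hk1, ?_, ?_⟩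
    · -- Monotone
      intro a b hab
      rcases Nat.eq_zero_or_pos a with ha | ha
      · subst ha
        rcases Nat.eq_zero_or_pos b with hb | hb
        · subst hb; exact le_refl _
        · calc τ 0 = -1 := by rw [hτ_def]; simp
          _ ≤ 0 := by norm_num
          _ ≤ τ b := hτnn b hb
      · have hb : 1 ≤ b := le_trans ha hab
        rw [hτ_def]
        simp only [if_neg (by omega : ¬ a = 0), if_neg (by omega : ¬ b = 0)]
        obtain ⟨hneb, hbdb, _⟩ := hmem (min b (K-1)) (by omega) (by omega)
        obtain ⟨hnea, hbda, _⟩ := hmem (min a (K-1)) (by omega) (by omega)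
        apply csInf_le_csInf hbda hneb
        intro x hx
        rw [hS_def] at hx ⊢
        simp only [mem_setOf_eq] at hx ⊢
        have hmm : ((min a (K-1) : ℕ):ℝ) ≤ ((min b (K-1) : ℕ):ℝ) :=
          Nat.cast_le.2 (min_le_min hab (le_refl _))
        calc ((min a (K-1) : ℕ):ℝ) * ε ≤ ((min b (K-1) : ℕ):ℝ) * ε :=
            mul_le_mul_of_nonneg_right hmm (le_of_lt hε)
          _ ≤ F x := hx
    · -- middle intervals
      intro k hk1 hk2
      have hτk : τ k = sInf (S k) := by
        rw [hτ_def]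
        simp only [if_neg (by omega : ¬ k = 0)]
        congr 1
        rw [min_eq_left (by omega)]
      rcases le_or_gt (τ k) (τ (k-1)) with hge | hlt
      · rw [Ioo_eq_empty (not_lt.2 hge)]
        simp [le_of_lt hε]
      have hIic : ((k:ℝ)-1) * ε ≤ (ν (Iic (τ (k-1)))).toReal := by
        rcases Nat.eq_zero_or_pos (k-1) with h0 | hpos
        · rw [h0]
          have : τ 0 = -1 := by rw [hτ_def]; simp
          rw [this, hneg (-1) (by norm_num)]
          have hk1' : (k:ℝ) = 1 := by exact_mod_cast (by omega : k = 1)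
          simp [hk1']
        · have hτk1 : τ (k-1) = sInf (S (k-1)) := by
            rw [hτ_def]
            simp only [if_neg (by omega : ¬ k - 1 = 0)]
            congr 1
            rw [min_eq_left (by omega)]
          have h := hQa (k-1) hpos (by omega)
          rw [← hτk1, hFeq] at h
          have hcast : (((k-1:ℕ)):ℝ) = (k:ℝ) - 1 := by
            rw [Nat.cast_sub (by omega : 1 ≤ k)]; norm_num
          rw [hcast] at h
          exact h
      have hIio : (ν (Iio (τ k))).toReal ≤ (k:ℝ) * ε := by
        have h := hQb k hk1 hk2
        rw [← hτk] at h
        have h2 : (ν (Iio (τ k))).toReal ≤ (ENNReal.ofReal ((k:ℝ)*ε)).toReal :=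
          ENNReal.toReal_mono ENNReal.ofReal_ne_top h
        rwa [ENNReal.toReal_ofReal (by positivity)] at h2
      -- additivity
      have hdisj : Disjoint (Iic (τ (k-1))) (Ioo (τ (k-1)) (τ k)) := by
        rw [Set.disjoint_left]
        intro x hx hx'
        exact absurd hx (not_le.2 hx'.1)
      have hun : Iic (τ (k-1)) ∪ Ioo (τ (k-1)) (τ k) ⊆ Iio (τ k) := by
        intro x hx
        rcases hx with hx | hx
        · exact lt_of_le_of_lt hx hlt
        · exact hx.2
      have hadd : ν (Iic (τ (k-1))) + ν (Ioo (τ (k-1)) (τ k)) ≤ ν (Iio (τ k)) := by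
        rw [← measure_union hdisj measurableSet_Ioo]
        exact measure_mono hun
      have htr : (ν (Iic (τ (k-1)))).toReal + (ν (Ioo (τ (k-1)) (τ k))).toReal
          ≤ (ν (Iio (τ k))).toReal := by
        rw [← ENNReal.toReal_add (measure_ne_top _ _) (measure_ne_top _ _)]
        exact ENNReal.toReal_mono (measure_ne_top _ _) hadd
      linarith
    · -- top interval
      have hK1 : 1 ≤ K - 1 := by omega
      have hτK : τ (K-1) = sInf (S (K-1)) := by
        rw [hτ_def]
        simp only [if_neg (by omega : ¬ K - 1 = 0)]
        congr 1
        rw [min_self]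
      have hIic : ((K:ℝ)-1) * ε ≤ (ν (Iic (τ (K-1)))).toReal := by
        have h := hQa (K-1) hK1 (le_refl _)
        rw [← hτK, hFeq] at h
        have hcast : (((K-1:ℕ)):ℝ) = (K:ℝ) - 1 := by
          rw [Nat.cast_sub (by omega : 1 ≤ K)]; norm_num
        rw [hcast] at h
        exact h
      have hcompl : (ν (Iic (τ (K-1)))).toReal + (ν (Ioi (τ (K-1)))).toReal = 1 := by
        rw [← ENNReal.toReal_add (measure_ne_top _ _) (measure_ne_top _ _),
          ← measure_union (Iic_disjoint_Ioi (le_refl _)) measurableSet_Ioi,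
          Iic_union_Ioi]
        simp
      linarith





lemma avg_mem_Icc {n : ℕ} {a : ℕ → ℝ} (h : ∀ i ∈ Finset.range n, a i ∈ Icc (0:ℝ) 1) :
    (n:ℝ)⁻¹ * ∑ i ∈ Finset.range n, a i ∈ Icc (0:ℝ) 1 := by
  rcases Nat.eq_zero_or_pos n with h0 | hpos
  · subst h0; simp
  have hn : (0:ℝ) < n := by exact_mod_cast hpos
  constructor
  · exact mul_nonneg (by positivity) (Finset.sum_nonneg fun i hi => (h i hi).1)
  · have : ∑ i ∈ Finset.range n, a i ≤ n := by
      calc ∑ i ∈ Finset.range n, a i ≤ ∑ i ∈ Finset.range n, (1:ℝ) :=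
        Finset.sum_le_sum fun i hi => (h i hi).2
      _ = n := by simp
    calc (n:ℝ)⁻¹ * ∑ i ∈ Finset.range n, a i ≤ (n:ℝ)⁻¹ * n :=
      mul_le_mul_of_nonneg_left this (by positivity)
    _ = 1 := by field_simp

lemma avg_le_avg {n : ℕ} {a b : ℕ → ℝ} (h : ∀ i ∈ Finset.range n, a i ≤ b i) :
    (n:ℝ)⁻¹ * ∑ i ∈ Finset.range n, a i ≤ (n:ℝ)⁻¹ * ∑ i ∈ Finset.range n, b i :=
  mul_le_mul_of_nonneg_left (Finset.sum_le_sum h) (by positivity)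

lemma avg_sub_avg_le {n : ℕ} {a b : ℕ → ℝ} {c : ℝ} (hc : 0 ≤ c)
    (h : ∀ i ∈ Finset.range n, a i - b i ≤ c) :
    (n:ℝ)⁻¹ * ∑ i ∈ Finset.range n, a i - (n:ℝ)⁻¹ * ∑ i ∈ Finset.range n, b i ≤ c := by
  rcases Nat.eq_zero_or_pos n with h0 | hpos
  · subst h0; simpa
  have hn : (0:ℝ) < n := by exact_mod_cast hpos
  rw [← mul_sub, ← Finset.sum_sub_distrib]
  have h1 : ∑ i ∈ Finset.range n, (a i - b i) ≤ (n:ℝ) * c := by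
    have h2 : ∑ i ∈ Finset.range n, (a i - b i) ≤ ∑ _i ∈ Finset.range n, c :=
      Finset.sum_le_sum h
    have h3 : ∑ _i ∈ Finset.range n, c = (n:ℝ) * c := by simp [mul_comm]
    linarith
  have h4 : (n:ℝ)⁻¹ * ∑ i ∈ Finset.range n, (a i - b i) ≤ (n:ℝ)⁻¹ * ((n:ℝ) * c) :=
    mul_le_mul_of_nonneg_left h1 (by positivity)
  have h5 : (n:ℝ)⁻¹ * ((n:ℝ) * c) = c := by field_simp
  linarith

lemma toReal_le_add_of_subset_union {Ω : Type*} [MeasurableSpace Ω] (P : Measure Ω)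
    [IsProbabilityMeasure P] {B C D : Set Ω} (h : B ⊆ C ∪ D) :
    (P B).toReal ≤ (P C).toReal + (P D).toReal := by
  have h1 : P B ≤ P C + P D := (measure_mono h).trans (measure_union_le C D)
  rw [← ENNReal.toReal_add (measure_ne_top _ _) (measure_ne_top _ _)]
  exact ENNReal.toReal_mono (by finiteness) h1

/-- Lemma 3.1 of the paper. If the row means of the expert-weighted
empirical sub-distribution functions converge uniformly to `H₁`, then the expert-weighted
empirical sub-distribution functions converge uniformly to `H₁` almost surely. -/
theorem crude_expert_subdistribution_consistency
    {Ω : Type*} [MeasurableSpace Ω] (P : Measure Ω) [IsProbabilityMeasure P]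
    (W : ℕ → Ω → ℝ) (X : ℕ → Ω → ℝ) (η : ℕ → ℕ → Ω → ℝ)
    (hWmeas : ∀ i, Measurable (W i)) (hXmeas : ∀ i, Measurable (X i))
    (hWnn : ∀ i ω, 0 ≤ W i ω)
    (hηmeas : ∀ n i, Measurable (η n i))
    (hη01 : ∀ n i ω, η n i ω ∈ Icc (0 : ℝ) 1)
    -- the `W i` are iid
    (hWiid : iIndepFun W P)
    (hWident : ∀ i, Measure.map (W i) P = Measure.map (W 0) P)
    -- within each row, the pairs `(W i, η n i)` are mutually independent
    (hrowindep : ∀ n, iIndepFun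
      (fun i ω => (W i ω, η n i ω)) P)
    (H₁ : ℝ → ℝ)
    (hH₁ : ∀ t, H₁ t = (P {ω | W 0 ω ≤ t ∧ W 0 ω = X 0 ω}).toReal)
    -- assumption (3.1): uniform convergence of the row means
    (hmean : Tendsto
      (fun n : ℕ => ⨆ t ∈ Ici (0 : ℝ),
        |(n : ℝ)⁻¹ * ∑ i ∈ Finset.range n,
            ∫ ω, (if W i ω ≤ t then η n i ω else 0) ∂P - H₁ t|)
      atTop (𝓝 0)) :
    ∀ᵐ ω ∂P, Tendsto
      (fun n : ℕ => ⨆ t ∈ Ici (0 : ℝ),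
        |(n : ℝ)⁻¹ * ∑ i ∈ Finset.range n,
            (if W i ω ≤ t then η n i ω else 0) - H₁ t|)
      atTop (𝓝 0) := by
  classical
  -- the common distribution
  set ν : Measure ℝ := P.map (W 0) with hν_def
  haveI hνprob : IsProbabilityMeasure ν := Measure.isProbabilityMeasure_map (hWmeas 0).aemeasurable
  have hνneg : ∀ t : ℝ, t < 0 → ν (Iic t) = 0 := by
    intro t ht
    rw [hν_def, Measure.map_apply (hWmeas 0) measurableSet_Iic]
    have he : (W 0) ⁻¹' (Iic t) = ∅ := by
      ext ω
      simp only [mem_preimage, mem_Iic, mem_empty_iff_false, iff_false, not_le]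
      exact lt_of_lt_of_le ht (hWnn 0 ω)
    simp [he]
  have hνIoo : ∀ s t : ℝ, ν (Ioo s t) = P {ω | W 0 ω ∈ Ioo s t} := fun s t => by
    rw [hν_def, Measure.map_apply (hWmeas 0) measurableSet_Ioo]; rfl
  have hνIoi : ∀ s : ℝ, ν (Ioi s) = P {ω | W 0 ω ∈ Ioi s} := fun s => by
    rw [hν_def, Measure.map_apply (hWmeas 0) measurableSet_Ioi]; rfl
  -- empirical quantities
  set Fn : ℕ → ℝ → Ω → ℝ := fun n t ω =>
    (n:ℝ)⁻¹ * ∑ i ∈ Finset.range n, (if W i ω ≤ t then η n i ω else 0) with hFn_def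
  set Fs : ℕ → ℝ → Ω → ℝ := fun n t ω =>
    (n:ℝ)⁻¹ * ∑ i ∈ Finset.range n, (if W i ω < t then η n i ω else 0) with hFs_def
  set Fi : ℕ → Ω → ℝ := fun n ω => (n:ℝ)⁻¹ * ∑ i ∈ Finset.range n, η n i ω with hFi_def
  set Gn : ℕ → ℝ → ℝ := fun n t =>
    (n:ℝ)⁻¹ * ∑ i ∈ Finset.range n, ∫ ω, (if W i ω ≤ t then η n i ω else 0) ∂P with hGn_def
  set Gs : ℕ → ℝ → ℝ := fun n t =>
    (n:ℝ)⁻¹ * ∑ i ∈ Finset.range n, ∫ ω, (if W i ω < t then η n i ω else 0) ∂P with hGs_def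
  set Gi : ℕ → ℝ := fun n => (n:ℝ)⁻¹ * ∑ i ∈ Finset.range n, ∫ ω, η n i ω ∂P with hGi_def
  set A : ℕ → ℝ := fun n => ⨆ t ∈ Ici (0:ℝ), |Gn n t - H₁ t| with hA_def
  have hmeanA : Tendsto A atTop (𝓝 0) := hmean
  -- basic measurability / integrability
  have hmeas_le : ∀ n i (t : ℝ), Measurable (fun ω => if W i ω ≤ t then η n i ω else 0) :=
    fun n i t => Measurable.ite (measurableSet_le (hWmeas i) measurable_const)
      (hηmeas n i) measurable_const
  have hmeas_lt : ∀ n i (t : ℝ), Measurable (fun ω => if W i ω < t then η n i ω else 0) :=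
    fun n i t => Measurable.ite (measurableSet_lt (hWmeas i) measurable_const)
      (hηmeas n i) measurable_const
  have hmem_le : ∀ n i (t : ℝ) ω, (if W i ω ≤ t then η n i ω else 0) ∈ Icc (0:ℝ) 1 :=
    fun n i t ω => by
      by_cases h : W i ω ≤ t
      · simpa [h] using hη01 n i ω
      · simp [h]
  have hmem_lt : ∀ n i (t : ℝ) ω, (if W i ω < t then η n i ω else 0) ∈ Icc (0:ℝ) 1 :=
    fun n i t ω => by
      by_cases h : W i ω < t
      · simpa [h] using hη01 n i ω
      · simp [h]
  have habs_of_Icc : ∀ x : ℝ, x ∈ Icc (0:ℝ) 1 → |x| ≤ 1 := fun x hx =>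
    abs_le.2 ⟨by linarith [hx.1], hx.2⟩
  have hint_le : ∀ n i (t : ℝ), Integrable (fun ω => if W i ω ≤ t then η n i ω else 0) P :=
    fun n i t => aux_integrable_bdd P (hmeas_le n i t) 1 fun ω => habs_of_Icc _ (hmem_le n i t ω)
  have hint_lt : ∀ n i (t : ℝ), Integrable (fun ω => if W i ω < t then η n i ω else 0) P :=
    fun n i t => aux_integrable_bdd P (hmeas_lt n i t) 1 fun ω => habs_of_Icc _ (hmem_lt n i t ω)
  have hint_η : ∀ n i, Integrable (η n i) P :=
    fun n i => aux_integrable_bdd P (hηmeas n i) 1 fun ω => habs_of_Icc _ (hη01 n i ω)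
  have hEmem_le : ∀ n i (t : ℝ), (∫ ω, (if W i ω ≤ t then η n i ω else 0) ∂P) ∈ Icc (0:ℝ) 1 := by
    intro n i t
    constructor
    · exact integral_nonneg fun ω => (hmem_le n i t ω).1
    · calc ∫ ω, (if W i ω ≤ t then η n i ω else 0) ∂P ≤ ∫ _, (1:ℝ) ∂P :=
        integral_mono (hint_le n i t) (integrable_const 1) fun ω => (hmem_le n i t ω).2
      _ = 1 := by simp
  -- integral of indicators
  have hind_int : ∀ (s : Set ℝ), MeasurableSet s → ∀ i : ℕ,
      ∫ ω, s.indicator (fun _ => (1:ℝ)) (W i ω) ∂P = (ν s).toReal := by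
    intro s hs i
    have h1 : ∫ ω, s.indicator (fun _ => (1:ℝ)) (W i ω) ∂P
        = ∫ x, s.indicator (fun _ => (1:ℝ)) x ∂(P.map (W i)) := by
      rw [integral_map (hWmeas i).aemeasurable
        (measurable_const.indicator hs).aestronglyMeasurable]
    rw [h1, hWident i, integral_indicator_const (1:ℝ) hs]
    simp
    rfl
  -- per-index comparisons
  have hB1 : ∀ (n i : ℕ) (s t : ℝ),
      (∫ ω, (if W i ω < t then η n i ω else 0) ∂P)
        - (∫ ω, (if W i ω ≤ s then η n i ω else 0) ∂P) ≤ (ν (Ioo s t)).toReal := by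
    intro n i s t
    rw [← integral_sub (hint_lt n i t) (hint_le n i s)]
    calc ∫ ω, ((if W i ω < t then η n i ω else 0) - (if W i ω ≤ s then η n i ω else 0)) ∂P
        ≤ ∫ ω, (Ioo s t).indicator (fun _ => (1:ℝ)) (W i ω) ∂P := by
          apply integral_mono ((hint_lt n i t).sub (hint_le n i s))
            (aux_integrable_bdd P ((measurable_const.indicator measurableSet_Ioo).comp (hWmeas i))
              1 fun ω => by
                by_cases h : W i ω ∈ Ioo s t <;>
                  simp [Function.comp, Set.indicator_apply, h])
          intro ω
          simp only [Pi.sub_apply, Function.comp_apply]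
          have hη := hη01 n i ω
          have hind0 : (0:ℝ) ≤ (Ioo s t).indicator (fun _ => (1:ℝ)) (W i ω) :=
            Set.indicator_nonneg (fun _ _ => zero_le_one) _
          by_cases h1 : W i ω < t
          · by_cases h2 : W i ω ≤ s
            · rw [if_pos h1, if_pos h2, sub_self]
              exact hind0
            · rw [if_pos h1, if_neg h2, sub_zero,
                Set.indicator_apply, if_pos (show W i ω ∈ Ioo s t from ⟨not_le.1 h2, h1⟩)]
              exact hη.2
          · rw [if_neg h1]
            have hle0 : (0:ℝ) - (if W i ω ≤ s then η n i ω else 0) ≤ 0 := by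
              by_cases h2 : W i ω ≤ s
              · rw [if_pos h2]; linarith [hη.1]
              · rw [if_neg h2]; norm_num
            exact hle0.trans hind0
      _ = (ν (Ioo s t)).toReal := hind_int _ measurableSet_Ioo i
  have hB2 : ∀ (n i : ℕ) (s : ℝ),
      (∫ ω, η n i ω ∂P) - (∫ ω, (if W i ω ≤ s then η n i ω else 0) ∂P)
        ≤ (ν (Ioi s)).toReal := by
    intro n i s
    rw [← integral_sub (hint_η n i) (hint_le n i s)]
    calc ∫ ω, (η n i ω - (if W i ω ≤ s then η n i ω else 0)) ∂P
        ≤ ∫ ω, (Ioi s).indicator (fun _ => (1:ℝ)) (W i ω) ∂P := by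
          apply integral_mono ((hint_η n i).sub (hint_le n i s))
            (aux_integrable_bdd P ((measurable_const.indicator measurableSet_Ioi).comp (hWmeas i))
              1 fun ω => by
                by_cases h : W i ω ∈ Ioi s <;>
                  simp [Function.comp, Set.indicator_apply, h])
          intro ω
          simp only [Pi.sub_apply, Function.comp_apply]
          have hη := hη01 n i ω
          have hind0 : (0:ℝ) ≤ (Ioi s).indicator (fun _ => (1:ℝ)) (W i ω) :=
            Set.indicator_nonneg (fun _ _ => zero_le_one) _
          by_cases h2 : W i ω ≤ s
          · rw [if_pos h2, sub_self]
            exact hind0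
          · rw [if_neg h2, sub_zero,
              Set.indicator_apply, if_pos (show W i ω ∈ Ioi s from not_le.1 h2)]
            exact hη.2
      _ = (ν (Ioi s)).toReal := hind_int _ measurableSet_Ioi i
  -- H-side facts
  set Hs : ℝ → ℝ := fun t => (P {ω | W 0 ω < t ∧ W 0 ω = X 0 ω}).toReal with hHs_def
  have hH₁mono : Monotone H₁ := by
    intro s t hst
    rw [hH₁ s, hH₁ t]
    exact ENNReal.toReal_mono (measure_ne_top _ _)
      (measure_mono fun ω h => ⟨h.1.trans hst, h.2⟩)
  have hH₁mem : ∀ t, H₁ t ∈ Icc (0:ℝ) 1 := fun t => by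
    rw [hH₁ t]
    refine ⟨ENNReal.toReal_nonneg, ?_⟩
    calc (P {ω | W 0 ω ≤ t ∧ W 0 ω = X 0 ω}).toReal ≤ (P univ).toReal :=
      ENNReal.toReal_mono (measure_ne_top _ _) (measure_mono (subset_univ _))
    _ = 1 := by simp
  have hH₁neg : H₁ (-1) = 0 := by
    rw [hH₁]
    have he : {ω | W 0 ω ≤ (-1:ℝ) ∧ W 0 ω = X 0 ω} = ∅ := by
      ext ω
      simp only [mem_setOf_eq, mem_empty_iff_false, iff_false, not_and]
      intro h
      exfalso
      linarith [hWnn 0 ω]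
    rw [he]
    simp
  have hle_Hs : ∀ s t : ℝ, s < t → H₁ s ≤ Hs t := by
    intro s t hst
    rw [hH₁ s, hHs_def]
    exact ENNReal.toReal_mono (measure_ne_top _ _)
      (measure_mono fun ω h => ⟨lt_of_le_of_lt h.1 hst, h.2⟩)
  have hHs_le : ∀ s t : ℝ, Hs t ≤ H₁ s + (ν (Ioo s t)).toReal := by
    intro s t
    rw [hHs_def, hH₁ s, hνIoo s t]
    apply toReal_le_add_of_subset_union P
    intro ω h
    by_cases hc : W 0 ω ≤ s
    · exact Or.inl ⟨hc, h.2⟩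
    · exact Or.inr ⟨not_le.1 hc, h.1⟩
  have hH₁top : ∀ s t : ℝ, H₁ t ≤ H₁ s + (ν (Ioi s)).toReal := by
    intro s t
    rw [hH₁ t, hH₁ s, hνIoi s]
    apply toReal_le_add_of_subset_union P
    intro ω h
    by_cases hc : W 0 ω ≤ s
    · exact Or.inl ⟨hc, h.2⟩
    · exact Or.inr (not_le.1 hc)
  -- strong law instances
  have hS1 : ∀ t : ℝ, ∀ᵐ ω ∂P, Tendsto (fun n => Fn n t ω - Gn n t) atTop (𝓝 0) := by
    intro t
    have hind : ∀ n, iIndepFun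
        (fun i ω => if W i ω ≤ t then η n i ω else 0) P := by
      intro n
      exact (hrowindep n).comp
        (fun _ => fun p : ℝ × ℝ => if p.1 ≤ t then p.2 else 0)
        (fun _ => Measurable.ite (measurableSet_le measurable_fst measurable_const)
          measurable_snd measurable_const)
    have h := tri_slln P (fun n i ω => if W i ω ≤ t then η n i ω else 0)
      (fun n i => hmeas_le n i t) (fun n i ω => hmem_le n i t ω) hind
    filter_upwards [h] with ω hω
    have heq : (fun n : ℕ => (n:ℝ)⁻¹ * ∑ i ∈ Finset.range n,
        ((if W i ω ≤ t then η n i ω else 0) - ∫ ω', (if W i ω' ≤ t then η n i ω' else 0) ∂P))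
        = fun n => Fn n t ω - Gn n t := by
      funext n
      rw [Finset.sum_sub_distrib, mul_sub]
    rwa [heq] at hω
  have hS2 : ∀ t : ℝ, ∀ᵐ ω ∂P, Tendsto (fun n => Fs n t ω - Gs n t) atTop (𝓝 0) := by
    intro t
    have hind : ∀ n, iIndepFun
        (fun i ω => if W i ω < t then η n i ω else 0) P := by
      intro n
      exact (hrowindep n).comp
        (fun _ => fun p : ℝ × ℝ => if p.1 < t then p.2 else 0)
        (fun _ => Measurable.ite (measurableSet_lt measurable_fst measurable_const)
          measurable_snd measurable_const)
    have h := tri_slln P (fun n i ω => if W i ω < t then η n i ω else 0)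
      (fun n i => hmeas_lt n i t) (fun n i ω => hmem_lt n i t ω) hind
    filter_upwards [h] with ω hω
    have heq : (fun n : ℕ => (n:ℝ)⁻¹ * ∑ i ∈ Finset.range n,
        ((if W i ω < t then η n i ω else 0) - ∫ ω', (if W i ω' < t then η n i ω' else 0) ∂P))
        = fun n => Fs n t ω - Gs n t := by
      funext n
      rw [Finset.sum_sub_distrib, mul_sub]
    rwa [heq] at hω
  have hS3 : ∀ᵐ ω ∂P, Tendsto (fun n => Fi n ω - Gi n) atTop (𝓝 0) := by
    have hind : ∀ n, iIndepFun (fun i ω => η n i ω) P := by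
      intro n
      exact (hrowindep n).comp (fun _ => (Prod.snd : ℝ × ℝ → ℝ)) (fun _ => measurable_snd)
    have h := tri_slln P (fun n i ω => η n i ω)
      (fun n i => hηmeas n i) (fun n i ω => hη01 n i ω) hind
    filter_upwards [h] with ω hω
    have heq : (fun n : ℕ => (n:ℝ)⁻¹ * ∑ i ∈ Finset.range n,
        (η n i ω - ∫ ω', η n i ω' ∂P)) = fun n => Fi n ω - Gi n := by
      funext n
      rw [Finset.sum_sub_distrib, mul_sub]
    rwa [heq] at hω
  -- grids for each ε = 1/(m+1)
  choose K τ hK0 hτ0 hτmono hτnn hmid htop using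
    fun m : ℕ => exists_grid ν hνneg (show (0:ℝ) < ((m:ℝ)+1)⁻¹ by positivity)
  -- assemble the a.s. event
  have hae : ∀ᵐ ω ∂P, (∀ m k : ℕ,
      Tendsto (fun n => Fn n (τ m k) ω - Gn n (τ m k)) atTop (𝓝 0) ∧
      Tendsto (fun n => Fs n (τ m k) ω - Gs n (τ m k)) atTop (𝓝 0)) ∧
      Tendsto (fun n => Fi n ω - Gi n) atTop (𝓝 0) := by
    refine Filter.Eventually.and ?_ hS3
    rw [ae_all_iff]
    intro m
    rw [ae_all_iff]
    intro k
    exact (hS1 (τ m k)).and (hS2 (τ m k))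
  filter_upwards [hae] with ω hω
  obtain ⟨hgridconv, hinfconv⟩ := hω
  -- boundedness facts
  have hFn_mem : ∀ n (t : ℝ), Fn n t ω ∈ Icc (0:ℝ) 1 :=
    fun n t => avg_mem_Icc (fun i _ => hmem_le n i t ω)
  have hGn_mem : ∀ n (t : ℝ), Gn n t ∈ Icc (0:ℝ) 1 :=
    fun n t => avg_mem_Icc (fun i _ => hEmem_le n i t)
  have hAnn : ∀ n, 0 ≤ A n := fun n => by
    simp only [hA_def]
    exact Real.iSup_nonneg fun t => Real.iSup_nonneg fun _ => abs_nonneg _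
  have hGH : ∀ n (t : ℝ), t ∈ Ici (0:ℝ) → |Gn n t - H₁ t| ≤ A n := by
    intro n t ht
    have hbdd : BddAbove (Set.range fun t' => ⨆ _ : t' ∈ Ici (0:ℝ), |Gn n t' - H₁ t'|) := by
      refine ⟨2, ?_⟩
      rintro x ⟨t', rfl⟩
      refine Real.iSup_le (fun _ => ?_) (by norm_num)
      have h1 := hGn_mem n t'
      have h2 := hH₁mem t'
      rw [abs_le]
      constructor <;> [linarith [h1.1, h2.2]; linarith [h1.2, h2.1]]
    have heq : |Gn n t - H₁ t| = ⨆ _ : t ∈ Ici (0:ℝ), |Gn n t - H₁ t| := by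
      haveI : Nonempty (t ∈ Ici (0:ℝ)) := ⟨ht⟩
      exact ciSup_const.symm
    simp only [hA_def]
    rw [heq]
    exact le_ciSup hbdd t
  have hGnneg : ∀ n, Gn n (-1) = 0 := by
    intro n
    have hz : ∀ i, ∫ ω', (if W i ω' ≤ (-1:ℝ) then η n i ω' else 0) ∂P = 0 := by
      intro i
      have heq : (fun ω' => if W i ω' ≤ (-1:ℝ) then η n i ω' else 0) = fun _ => (0:ℝ) :=
        funext fun ω' => if_neg (by linarith [hWnn i ω'])
      rw [heq, integral_zero]
    simp only [hGn_def, hz, Finset.sum_const_zero, mul_zero]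
  have hFnneg : ∀ n, Fn n (-1) ω = 0 := by
    intro n
    simp only [hFn_def]
    rw [Finset.sum_eq_zero, mul_zero]
    intro i _
    exact if_neg (by linarith [hWnn i ω])
  -- main convergence
  show Tendsto (fun n : ℕ => ⨆ t ∈ Ici (0:ℝ), |Fn n t ω - H₁ t|) atTop (𝓝 0)
  rw [NormedAddCommGroup.tendsto_nhds_zero]
  intro δ hδ
  have hδ3 : 0 < δ/3 := by linarith
  obtain ⟨m, hm⟩ := exists_nat_one_div_lt hδ3
  have hε0 : (0:ℝ) < ((m:ℝ)+1)⁻¹ := by positivity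
  have hεδ : ((m:ℝ)+1)⁻¹ < δ/3 := by rw [← one_div]; exact hm
  have e1 : ∀ᶠ n in atTop, A n < δ/3 := by
    have h := NormedAddCommGroup.tendsto_nhds_zero.1 hmeanA (δ/3) hδ3
    filter_upwards [h] with n hn
    calc A n ≤ |A n| := le_abs_self _
    _ < δ/3 := by rwa [Real.norm_eq_abs] at hn
  have e2 : ∀ᶠ n in atTop, ∀ k ∈ Finset.range (K m),
      |Fn n (τ m k) ω - Gn n (τ m k)| < δ/3 ∧ |Fs n (τ m k) ω - Gs n (τ m k)| < δ/3 := by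
    rw [eventually_all_finset]
    intro k _
    have h1 := NormedAddCommGroup.tendsto_nhds_zero.1 (hgridconv m k).1 (δ/3) hδ3
    have h2 := NormedAddCommGroup.tendsto_nhds_zero.1 (hgridconv m k).2 (δ/3) hδ3
    filter_upwards [h1, h2] with n hn1 hn2
    exact ⟨by rwa [Real.norm_eq_abs] at hn1, by rwa [Real.norm_eq_abs] at hn2⟩
  have e3 : ∀ᶠ n in atTop, |Fi n ω - Gi n| < δ/3 := by
    have h := NormedAddCommGroup.tendsto_nhds_zero.1 hinfconv (δ/3) hδ3
    filter_upwards [h] with n hn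
    rwa [Real.norm_eq_abs] at hn
  filter_upwards [e1, e2, e3] with n hA3 hgrid3 hinf3
  have key : ∀ t : ℝ, t ∈ Ici (0:ℝ) → |Fn n t ω - H₁ t| ≤ ((m:ℝ)+1)⁻¹ + A n + δ/3 := by
    intro t ht
    rw [mem_Ici] at ht
    set k₀ := Nat.findGreatest (fun k => τ m k ≤ t) (K m - 1) with hk₀_def
    have hk₀le : k₀ ≤ K m - 1 := Nat.findGreatest_le _
    have hKlt : K m - 1 < K m := by have := hK0 m; omega
    have hk₀P : τ m k₀ ≤ t := by
      have h := Nat.findGreatest_spec (P := fun k => τ m k ≤ t)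
        (Nat.zero_le (K m - 1)) (show τ m 0 ≤ t by rw [hτ0 m]; linarith)
      exact h
    have hGHk : |Gn n (τ m k₀) - H₁ (τ m k₀)| ≤ A n := by
      rcases Nat.eq_zero_or_pos k₀ with h0 | hpos
      · rw [h0, hτ0 m, hGnneg n, hH₁neg]
        simpa using hAnn n
      · exact hGH n (τ m k₀) (hτnn m k₀ hpos hk₀le)
    have hFGk : |Fn n (τ m k₀) ω - Gn n (τ m k₀)| < δ/3 :=
      (hgrid3 k₀ (Finset.mem_range.2 (lt_of_le_of_lt hk₀le hKlt))).1
    have hFn_mono : Fn n (τ m k₀) ω ≤ Fn n t ω := avg_le_avg (fun i _ => by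
      by_cases h : W i ω ≤ τ m k₀
      · rw [if_pos h, if_pos (h.trans hk₀P)]
      · rw [if_neg h]
        exact (hmem_le n i t ω).1)
    rcases lt_or_eq_of_le hk₀le with hcase | hcase
    · -- middle case
      have hk1 : k₀ + 1 ≤ K m - 1 := by omega
      have htlt : t < τ m (k₀+1) := by
        have h := Nat.findGreatest_is_greatest (P := fun k => τ m k ≤ t) (n := K m - 1)
          (k := k₀ + 1) (by rw [← hk₀_def]; omega) hk1
        exact not_le.1 h
      have hν' : (ν (Ioo (τ m k₀) (τ m (k₀+1)))).toReal ≤ ((m:ℝ)+1)⁻¹ := by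
        have h := hmid m (k₀+1) (by omega) hk1
        simpa using h
      have hFsGs : |Fs n (τ m (k₀+1)) ω - Gs n (τ m (k₀+1))| < δ/3 :=
        (hgrid3 (k₀+1) (Finset.mem_range.2 (lt_of_le_of_lt hk1 hKlt))).2
      have h1 : Fn n t ω ≤ Fs n (τ m (k₀+1)) ω := avg_le_avg (fun i _ => by
        by_cases h : W i ω ≤ t
        · rw [if_pos h, if_pos (lt_of_le_of_lt h htlt)]
        · rw [if_neg h]
          exact (hmem_lt n i _ ω).1)
      have h2 : Gs n (τ m (k₀+1)) - Gn n (τ m k₀)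
          ≤ (ν (Ioo (τ m k₀) (τ m (k₀+1)))).toReal :=
        avg_sub_avg_le ENNReal.toReal_nonneg (fun i _ => hB1 n i _ _)
      have h3 : H₁ (τ m k₀) ≤ H₁ t := hH₁mono hk₀P
      have hup : Fn n t ω - H₁ t ≤ ((m:ℝ)+1)⁻¹ + A n + δ/3 := by
        have ha := abs_lt.1 hFsGs
        have hb := abs_le.1 hGHk
        linarith [ha.2, hb.1, hb.2]
      have hlo : H₁ t - Fn n t ω ≤ ((m:ℝ)+1)⁻¹ + A n + δ/3 := by
        have l1 : H₁ t ≤ Hs (τ m (k₀+1)) := hle_Hs t _ htlt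
        have l2 : Hs (τ m (k₀+1)) ≤ H₁ (τ m k₀)
            + (ν (Ioo (τ m k₀) (τ m (k₀+1)))).toReal := hHs_le _ _
        have ha := abs_lt.1 hFGk
        have hb := abs_le.1 hGHk
        linarith [ha.1, hb.1, hb.2]
      rw [abs_sub_le_iff]
      exact ⟨hup, hlo⟩
    · -- top case
      have hν' : (ν (Ioi (τ m k₀))).toReal ≤ ((m:ℝ)+1)⁻¹ := by
        rw [hcase]
        exact htop m
      have u1 : Fn n t ω ≤ Fi n ω := avg_le_avg (fun i _ => by
        by_cases h : W i ω ≤ t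
        · rw [if_pos h]
        · rw [if_neg h]
          exact (hη01 n i ω).1)
      have u3 : Gi n - Gn n (τ m k₀) ≤ (ν (Ioi (τ m k₀))).toReal :=
        avg_sub_avg_le ENNReal.toReal_nonneg (fun i _ => hB2 n i _)
      have h3 : H₁ (τ m k₀) ≤ H₁ t := hH₁mono hk₀P
      have hup : Fn n t ω - H₁ t ≤ ((m:ℝ)+1)⁻¹ + A n + δ/3 := by
        have hb := abs_le.1 hGHk
        linarith [hinf3, abs_lt.1 hinf3 |>.2, hb.1, hb.2]
      have hlo : H₁ t - Fn n t ω ≤ ((m:ℝ)+1)⁻¹ + A n + δ/3 := by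
        have l1 : H₁ t ≤ H₁ (τ m k₀) + (ν (Ioi (τ m k₀))).toReal := hH₁top _ _
        have ha := abs_lt.1 hFGk
        have hb := abs_le.1 hGHk
        linarith [ha.1, hb.1, hb.2]
      rw [abs_sub_le_iff]
      exact ⟨hup, hlo⟩
  have hcnn : (0:ℝ) ≤ ((m:ℝ)+1)⁻¹ + A n + δ/3 := by
    have := hAnn n
    positivity
  have hsup_le : (⨆ t ∈ Ici (0:ℝ), |Fn n t ω - H₁ t|) ≤ ((m:ℝ)+1)⁻¹ + A n + δ/3 :=
    Real.iSup_le (fun t => Real.iSup_le (fun htt => key t htt) hcnn) hcnn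
  have hsup_nn : (0:ℝ) ≤ ⨆ t ∈ Ici (0:ℝ), |Fn n t ω - H₁ t| :=
    Real.iSup_nonneg fun t => Real.iSup_nonneg fun _ => abs_nonneg _
  rw [Real.norm_eq_abs, abs_of_nonneg hsup_nn]
  calc (⨆ t ∈ Ici (0:ℝ), |Fn n t ω - H₁ t|) ≤ ((m:ℝ)+1)⁻¹ + A n + δ/3 := hsup_le
  _ < δ/3 + δ/3 + δ/3 := by linarith
  _ = δ := by ring
end

section
/- Let X, Y, C be mutually independent with W = X ∧ Y ∧ C, δ = 1_{W = X ∧ Y}, G the cdf of C, and F the cdf of X. Then for every t ≥ 0 with G(t−) < 1, E[1_{X ≤ t} · δ / (1 − G(W−))] = F(t). -/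
open MeasureTheory ProbabilityTheory Filter Set Function
open scoped Topology ENNReal

/-- With `X, Y, C` mutually independent, `W = X ∧ Y ∧ C`,
`δ = 1_{W = X ∧ Y}`, `G` the cdf of `C` and `F` the cdf of `X`, for every `t ≥ 0` with
`G(t−) < 1` one has `E[1_{X ≤ t} δ / (1 − G(W−))] = F(t)`. -/
theorem ipcw_unbiasedness
    {Ω : Type*} [MeasurableSpace Ω] (P : Measure Ω) [IsProbabilityMeasure P]
    (X Y C : Ω → ℝ)
    (hX : Measurable X) (hY : Measurable Y) (hC : Measurable C)
    (hXnn : ∀ ω, 0 ≤ X ω) (hYnn : ∀ ω, 0 ≤ Y ω) (hCnn : ∀ ω, 0 ≤ C ω)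
    (hindep : iIndepFun ![X, Y, C] P)
    (G : ℝ → ℝ) (hG : ∀ t, G t = (P {ω | C ω ≤ t}).toReal)
    (F : ℝ → ℝ) (hF : ∀ t, F t = (P {ω | X ω ≤ t}).toReal)
    (W : Ω → ℝ) (hW : ∀ ω, W ω = min (min (X ω) (Y ω)) (C ω))
    (δ : Ω → ℝ) (hδ : ∀ ω, δ ω = if min (X ω) (Y ω) ≤ C ω then 1 else 0) :
    ∀ t, 0 ≤ t → leftLim G t < 1 →
      ∫ ω, (if X ω ≤ t then δ ω / (1 - leftLim G (W ω)) else 0) ∂P = F t := by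
  intro t ht hGt
  set μC : Measure ℝ := P.map C with hμC
  haveI : IsProbabilityMeasure μC := Measure.isProbabilityMeasure_map hC.aemeasurable
  have hGmap : ∀ s, G s = (μC (Iic s)).toReal := by
    intro s
    rw [hG, hμC, Measure.map_apply hC measurableSet_Iic]
    rfl
  have hGmono : Monotone G := by
    intro a b hab
    rw [hGmap, hGmap]
    exact ENNReal.toReal_mono (measure_ne_top _ _)
      (measure_mono (Iic_subset_Iic.2 hab))
  -- leftLim of the cdf is the measure of `Iio`
  have hleft : ∀ r : ℝ, leftLim G r = (μC (Iio r)).toReal := by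
    intro r
    have hulim : Tendsto (fun n : ℕ => r - 1 / (n + 1)) atTop (𝓝[<] r) := by
      apply tendsto_nhdsWithin_of_tendsto_nhds_of_eventually_within
      · have h0 : Tendsto (fun n : ℕ => (1 : ℝ) / (n + 1)) atTop (𝓝 0) :=
          tendsto_one_div_add_atTop_nhds_zero_nat
        simpa using tendsto_const_nhds.sub h0
      · filter_upwards with n
        have : (0 : ℝ) < 1 / (n + 1) := by positivity
        simp only [Set.mem_Iio]
        linarith
    have h1 : Tendsto (fun n : ℕ => G (r - 1 / (n + 1))) atTop (𝓝 (leftLim G r)) :=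
      (hGmono.tendsto_leftLim r).comp hulim
    have hUnion : ⋃ n : ℕ, Iic (r - 1 / (n + 1)) = Iio r := by
      ext x
      simp only [mem_iUnion, mem_Iic, mem_Iio]
      constructor
      · rintro ⟨n, hn⟩
        have : (0 : ℝ) < 1 / (n + 1) := by positivity
        linarith
      · intro hx
        obtain ⟨n, hn⟩ := exists_nat_one_div_lt (sub_pos.2 hx)
        exact ⟨n, by linarith⟩
    have hmonoset : Monotone (fun n : ℕ => Iic (r - 1 / ((n : ℝ) + 1))) := by
      intro a b hab
      apply Iic_subset_Iic.2
      have hba : ((a : ℝ) + 1) ≤ (b : ℝ) + 1 := by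
        have := (Nat.cast_le (α := ℝ)).2 hab
        linarith
      have : (1 : ℝ) / (b + 1) ≤ 1 / (a + 1) :=
        one_div_le_one_div_of_le (by positivity) hba
      linarith
    have h2 : Tendsto (fun n : ℕ => μC (Iic (r - 1 / (n + 1)))) atTop (𝓝 (μC (Iio r))) := by
      rw [← hUnion]
      exact tendsto_measure_iUnion_atTop hmonoset
    have h3 : Tendsto (fun n : ℕ => G (r - 1 / (n + 1))) atTop (𝓝 ((μC (Iio r)).toReal)) := by
      simp only [hGmap]
      exact (ENNReal.tendsto_toReal (measure_ne_top _ _)).comp h2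
    exact tendsto_nhds_unique h1 h3
  have hLLmono : Monotone (leftLim G) := hGmono.leftLim
  have hLLmeas : Measurable (leftLim G) := hLLmono.measurable
  set V : Ω → ℝ × ℝ := fun ω => (X ω, Y ω) with hV
  have hVmeas : Measurable V := hX.prodMk hY
  set μV : Measure (ℝ × ℝ) := P.map V with hμV
  haveI : IsProbabilityMeasure μV := Measure.isProbabilityMeasure_map hVmeas.aemeasurable
  have hVC : IndepFun V C P := by
    have := hindep.indepFun_prodMk (f := ![X, Y, C])
      (by intro i; fin_cases i <;> assumption) 0 1 2 (by decide) (by decide)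
    simpa [hV] using this
  have hmap : P.map (fun ω => (V ω, C ω)) = μV.prod μC :=
    (indepFun_iff_map_prod_eq_prod_map_map hVmeas.aemeasurable hC.aemeasurable).1 hVC
  set Φ : (ℝ × ℝ) × ℝ → ℝ := fun p =>
    if p.1.1 ≤ t then
      (if min p.1.1 p.1.2 ≤ p.2 then (1 : ℝ) else 0)
        / (1 - leftLim G (min (min p.1.1 p.1.2) p.2))
    else 0 with hΦdef
  have hΦmeas : Measurable Φ := by
    apply Measurable.ite (measurableSet_le (measurable_fst.comp measurable_fst)
      measurable_const)
    · apply Measurable.div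
      · exact Measurable.ite
          (measurableSet_le ((measurable_fst.comp measurable_fst).min
            (measurable_snd.comp measurable_fst)) measurable_snd)
          measurable_const measurable_const
      · exact measurable_const.sub (hLLmeas.comp
          (((measurable_fst.comp measurable_fst).min
            (measurable_snd.comp measurable_fst)).min measurable_snd))
    · exact measurable_const
  have hpos : 0 < 1 - leftLim G t := by linarith
  have hbound : ∀ p : (ℝ × ℝ) × ℝ, ‖Φ p‖ ≤ (1 - leftLim G t)⁻¹ := by
    intro p
    rw [Real.norm_eq_abs]
    by_cases h1 : p.1.1 ≤ t
    · by_cases h2 : min p.1.1 p.1.2 ≤ p.2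
      · have hmin : min (min p.1.1 p.1.2) p.2 = min p.1.1 p.1.2 := min_eq_left h2
        set a := leftLim G (min p.1.1 p.1.2) with ha
        have hat : a ≤ leftLim G t := hLLmono (le_trans (min_le_left _ _) h1)
        have hpa : 0 < 1 - a := by linarith
        have hΦp : Φ p = (1 - a)⁻¹ := by
          simp only [hΦdef]
          rw [if_pos h1, if_pos h2, hmin, one_div]
        rw [hΦp, abs_of_nonneg (le_of_lt (inv_pos.2 hpa))]
        exact inv_anti₀ hpos (by linarith)
      · have hΦp : Φ p = 0 := by
          simp only [hΦdef]
          rw [if_pos h1, if_neg h2, zero_div]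
        rw [hΦp, abs_zero]
        exact le_of_lt (inv_pos.2 hpos)
    · have hΦp : Φ p = 0 := by simp [hΦdef, h1]
      rw [hΦp, abs_zero]
      exact le_of_lt (inv_pos.2 hpos)
  have hint : Integrable Φ (μV.prod μC) :=
    (integrable_const ((1 - leftLim G t)⁻¹)).mono' hΦmeas.aestronglyMeasurable
      (Filter.Eventually.of_forall hbound)
  have hrew : (fun ω => if X ω ≤ t then δ ω / (1 - leftLim G (W ω)) else 0)
      = fun ω => Φ ((V ω), C ω) := by
    funext ω
    simp only [hΦdef, hδ, hW, hV]
  have hinner : ∀ v : ℝ × ℝ, ∫ c, Φ (v, c) ∂μC = if v.1 ≤ t then (1 : ℝ) else 0 := by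
    intro v
    by_cases h1 : v.1 ≤ t
    · rw [if_pos h1]
      set m := min v.1 v.2 with hm
      set a := leftLim G m with ha
      have hat : a ≤ leftLim G t := hLLmono (le_trans (min_le_left _ _) h1)
      have hpa : 0 < 1 - a := by linarith
      have hfun : (fun c => Φ (v, c))
          = Set.indicator (Ici m) (fun _ => (1 - a)⁻¹) := by
        funext c
        by_cases h2 : m ≤ c
        · have hmin : min m c = m := min_eq_left h2
          rw [Set.indicator_of_mem (show c ∈ Ici m from h2)]
          simp only [hΦdef]
          rw [if_pos h1, if_pos h2, hmin, one_div]
        · rw [Set.indicator_of_notMem (show c ∉ Ici m from h2)]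
          simp only [hΦdef]
          rw [if_pos h1, if_neg h2, zero_div]
      rw [hfun, integral_indicator_const _ measurableSet_Ici]
      have hIci : (μC (Ici m)).toReal = 1 - a := by
        have hcompl : μC (Ici m) = 1 - μC (Iio m) := by
          rw [← compl_Iio, measure_compl measurableSet_Iio (measure_ne_top _ _),
            measure_univ]
        rw [hcompl, ENNReal.toReal_sub_of_le prob_le_one ENNReal.one_ne_top,
          ENNReal.toReal_one, ha, hleft m]
      rw [smul_eq_mul, measureReal_def, hIci, mul_inv_cancel₀ (by linarith)]
    · rw [if_neg h1]
      have : (fun c => Φ (v, c)) = fun _ => (0 : ℝ) := by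
        funext c
        simp [hΦdef, h1]
      rw [this, integral_const, smul_zero]
  calc ∫ ω, (if X ω ≤ t then δ ω / (1 - leftLim G (W ω)) else 0) ∂P
      = ∫ ω, Φ ((V ω), C ω) ∂P := by rw [hrew]
    _ = ∫ p, Φ p ∂(P.map (fun ω => (V ω, C ω))) :=
        (integral_map (hVmeas.prodMk hC).aemeasurable
          hΦmeas.aestronglyMeasurable).symm
    _ = ∫ p, Φ p ∂(μV.prod μC) := by rw [hmap]
    _ = ∫ v, ∫ c, Φ (v, c) ∂μC ∂μV := integral_prod _ hint
    _ = ∫ v, (if v.1 ≤ t then (1 : ℝ) else 0) ∂μV := by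
        congr 1
        funext v
        exact hinner v
    _ = F t := by
        have hset : (fun v : ℝ × ℝ => if v.1 ≤ t then (1 : ℝ) else 0)
            = Set.indicator (Prod.fst ⁻¹' Iic t) (fun _ => (1 : ℝ)) := by
          funext v
          by_cases h : v.1 ≤ t
          · rw [if_pos h,
              Set.indicator_of_mem (show v ∈ Prod.fst ⁻¹' Iic t from h)]
          · rw [if_neg h,
              Set.indicator_of_notMem (show v ∉ Prod.fst ⁻¹' Iic t from h)]
        rw [hset, integral_indicator_const _ (measurable_fst measurableSet_Iic),
          smul_eq_mul, mul_one, measureReal_def, hμV, Measure.map_apply hVmeas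
            (measurable_fst measurableSet_Iic), hF]
        rfl
end

section
/- Let X, Y, C be mutually independent, W_i = X_i ∧ Y_i ∧ C_i, δ_i = 1_{W_i = X_i ∧ Y_i} for iid replicates, F the cdf of X, G the cdf of C, H the cdf of W. For every θ with H(θ) < 1, sup_{0 ≤ t ≤ θ} |(1/n)∑_{i=1}^n 1_{X_i ≤ t} δ_i/(1 − G(W_i−)) − F(t)| → 0 almost surely as n → ∞. -/
open MeasureTheory ProbabilityTheory Filter Set Function
open scoped Topology ENNReal

namespace OracleIPCW

lemma seq_lt (z : ℝ) : Tendsto (fun n : ℕ => z - 1/(n+1)) atTop (𝓝[<] z) := by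
  apply tendsto_nhdsWithin_of_tendsto_nhds_of_eventually_within
  · have : Tendsto (fun n : ℕ => 1/((n:ℝ)+1)) atTop (𝓝 0) := tendsto_one_div_add_atTop_nhds_zero_nat
    simpa using (tendsto_const_nhds (x := z)).sub this
  · filter_upwards with n
    have : (0:ℝ) < 1/((n:ℝ)+1) := by positivity
    simp only [mem_Iio]; linarith

lemma cdf_mono (μ : Measure ℝ) [IsProbabilityMeasure μ] (F : ℝ → ℝ)
    (hF : ∀ t, F t = (μ (Iic t)).toReal) : Monotone F := by
  intro a b hab
  rw [hF, hF]
  exact ENNReal.toReal_mono (measure_ne_top μ _) (measure_mono (Iic_subset_Iic.2 hab))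

lemma cdf_le_one (μ : Measure ℝ) [IsProbabilityMeasure μ] (F : ℝ → ℝ)
    (hF : ∀ t, F t = (μ (Iic t)).toReal) (t : ℝ) : F t ≤ 1 := by
  rw [hF]
  exact ENNReal.toReal_le_of_le_ofReal one_pos.le (by simpa using prob_le_one)

lemma cdf_nonneg (μ : Measure ℝ) [IsProbabilityMeasure μ] (F : ℝ → ℝ)
    (hF : ∀ t, F t = (μ (Iic t)).toReal) (t : ℝ) : 0 ≤ F t := by
  rw [hF]; exact ENNReal.toReal_nonneg

/-- `F(z-1/(n+1)) → μ(Iio z)`. -/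
lemma cdf_tendsto_left (μ : Measure ℝ) [IsProbabilityMeasure μ] (F : ℝ → ℝ)
    (hF : ∀ t, F t = (μ (Iic t)).toReal) (z : ℝ) :
    Tendsto (fun n : ℕ => F (z - 1/(n+1))) atTop (𝓝 ((μ (Iio z)).toReal)) := by
  have hmono : Monotone (fun n : ℕ => Iic (z - 1/(n+1))) := by
    intro a b hab
    apply Iic_subset_Iic.2
    have : 1/((b:ℝ)+1) ≤ 1/((a:ℝ)+1) := by
      apply one_div_le_one_div_of_le (by positivity)
      have := (Nat.cast_le (α := ℝ)).2 hab; linarith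
    linarith
  have hU : (⋃ n : ℕ, Iic (z - 1/(n+1))) = Iio z := by
    ext x
    simp only [mem_iUnion, mem_Iic, mem_Iio]
    constructor
    · rintro ⟨n, hn⟩
      have : (0:ℝ) < 1/((n:ℝ)+1) := by positivity
      linarith
    · intro hx
      obtain ⟨n, hn⟩ := exists_nat_one_div_lt (show (0:ℝ) < z - x by linarith)
      exact ⟨n, by linarith⟩
  have h1 : Tendsto (fun n : ℕ => μ (Iic (z - 1/(n+1)))) atTop (𝓝 (μ (Iio z))) := by
    have := tendsto_measure_iUnion_atTop (μ := μ) hmono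
    rwa [hU] at this
  have h2 := (ENNReal.tendsto_toReal (measure_ne_top μ _)).comp h1
  simpa [hF, Function.comp_def] using h2

/-- left limit of a cdf. -/
lemma cdf_leftLim (μ : Measure ℝ) [IsProbabilityMeasure μ] (G : ℝ → ℝ)
    (hG : ∀ t, G t = (μ (Iic t)).toReal) (z : ℝ) : leftLim G z = (μ (Iio z)).toReal := by
  have hm := cdf_mono μ G hG
  have h1 : Tendsto (fun n : ℕ => G (z - 1/(n+1))) atTop (𝓝 (leftLim G z)) :=
    (hm.tendsto_leftLim z).comp (seq_lt z)
  exact tendsto_nhds_unique h1 (cdf_tendsto_left μ G hG z)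

/-- right continuity along `t + 1/(n+1)`. -/
lemma cdf_tendsto_right (μ : Measure ℝ) [IsProbabilityMeasure μ] (F : ℝ → ℝ)
    (hF : ∀ t, F t = (μ (Iic t)).toReal) (t : ℝ) :
    Tendsto (fun n : ℕ => F (t + 1/(n+1))) atTop (𝓝 (F t)) := by
  have hanti : Antitone (fun n : ℕ => Iic (t + 1/(n+1))) := by
    intro a b hab
    apply Iic_subset_Iic.2
    have : 1/((b:ℝ)+1) ≤ 1/((a:ℝ)+1) := by
      apply one_div_le_one_div_of_le (by positivity)
      have := (Nat.cast_le (α := ℝ)).2 hab; linarith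
    linarith
  have hI : (⋂ n : ℕ, Iic (t + 1/(n+1))) = Iic t := by
    ext x
    simp only [mem_iInter, mem_Iic]
    constructor
    · intro h
      by_contra hx
      push_neg at hx
      obtain ⟨n, hn⟩ := exists_nat_one_div_lt (show (0:ℝ) < x - t by linarith)
      have := h n
      linarith
    · intro hx n
      have : (0:ℝ) < 1/((n:ℝ)+1) := by positivity
      linarith
  have h1 : Tendsto (fun n : ℕ => μ (Iic (t + 1/(n+1)))) atTop (𝓝 (μ (Iic t))) := by
    have := tendsto_measure_iInter_atTop (μ := μ)
      (fun n => (measurableSet_Iic).nullMeasurableSet) hanti ⟨0, measure_ne_top μ _⟩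
    rwa [hI] at this
  have h2 := (ENNReal.tendsto_toReal (measure_ne_top μ _)).comp h1
  simpa [hF, Function.comp_def] using h2



section Grid

variable (μ : Measure ℝ) [IsProbabilityMeasure μ] (F : ℝ → ℝ)
  (hF : ∀ t, F t = (μ (Iic t)).toReal) (θ : ℝ) (hθ : 0 ≤ θ) (ε : ℝ) (hε : 0 < ε)

/-- grid point -/
def gpS (j : ℕ) : Set ℝ := {0} ∪ {x | x ≤ θ ∧ F x < F 0 + j * ε}

noncomputable def gp (j : ℕ) : ℝ := sSup (gpS F θ ε j)

variable {F θ ε} in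
lemma gpS_ne (j : ℕ) : (gpS F θ ε j).Nonempty := ⟨0, Or.inl rfl⟩

variable {F θ ε} in
lemma mem_gpS {j : ℕ} {x : ℝ} (h1 : x ≤ θ) (h2 : F x < F 0 + j * ε) : x ∈ gpS F θ ε j :=
  Or.inr ⟨h1, h2⟩

variable {F θ ε} in
lemma zero_mem_gpS (j : ℕ) : (0:ℝ) ∈ gpS F θ ε j := Or.inl rfl

variable {F θ ε}

include hθ in
lemma gp_mem_bdd (j : ℕ) : BddAbove (gpS F θ ε j) := by
  rw [gpS]
  refine ⟨θ, ?_⟩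
  rintro x (rfl | ⟨hx, _⟩)
  · exact hθ
  · exact hx

include hθ in
lemma gp_nonneg (j : ℕ) : 0 ≤ gp F θ ε j :=
  le_csSup (gp_mem_bdd hθ _) (zero_mem_gpS j)

include hθ in
lemma gp_le_theta (j : ℕ) : gp F θ ε j ≤ θ := by
  apply csSup_le (gpS_ne j)
  rintro x (rfl | ⟨hx, _⟩)
  · exact hθ
  · exact hx

include hθ in
lemma gp_mono (hε : 0 < ε) : Monotone (gp F θ ε) := by
  intro a b hab
  apply csSup_le_csSup (gp_mem_bdd hθ _) (gpS_ne a)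
  rintro x (rfl | ⟨hx, hFx⟩)
  · exact Or.inl rfl
  · refine Or.inr ⟨hx, lt_of_lt_of_le hFx ?_⟩
    have : (a:ℝ) ≤ b := Nat.cast_le.2 hab
    nlinarith

include hF hθ in
lemma gp_zero : gp F θ ε 0 = 0 := by
  refine le_antisymm ?_ (gp_nonneg hθ 0)
  apply csSup_le (gpS_ne 0)
  rintro x (rfl | ⟨hx, hFx⟩)
  · exact le_rfl
  · by_contra h
    push_neg at h
    have := cdf_mono μ F hF h.le
    simp at hFx
    linarith

include hF hθ in
lemma gp_top {m : ℕ} (hm : 1 < (m:ℝ) * ε) : gp F θ ε m = θ := by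
  refine le_antisymm (gp_le_theta hθ m) ?_
  apply le_csSup (gp_mem_bdd hθ _)
  refine mem_gpS le_rfl ?_
  have h1 := cdf_le_one μ F hF θ
  have h0 := cdf_nonneg μ F hF 0
  linarith

include hF hθ in
lemma gp_increment (hε : 0 < ε) (j : ℕ) :
    (μ (Iio (gp F θ ε (j+1)))).toReal ≤ F (gp F θ ε j) + ε := by
  rcases eq_or_lt_of_le (gp_le_theta hθ j : gp F θ ε j ≤ θ) with hjθ | hjθ
  · -- s j = θ : use Iio (s (j+1)) ⊆ Iic θ
    have h1 : (μ (Iio (gp F θ ε (j+1)))).toReal ≤ F θ := by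
      rw [hF]
      exact ENNReal.toReal_mono (measure_ne_top μ _)
        (measure_mono (fun x hx => le_trans (le_of_lt hx) (gp_le_theta hθ _)))
    rw [hjθ]
    linarith
  · -- s j < θ : F (s j) ≥ F 0 + j ε by right continuity
    have hFj : F 0 + j * ε ≤ F (gp F θ ε j) := by
      have hev : ∀ᶠ n : ℕ in atTop, F 0 + j * ε ≤ F (gp F θ ε j + 1/(n+1)) := by
        obtain ⟨n₀, hn₀⟩ := exists_nat_one_div_lt (show (0:ℝ) < θ - gp F θ ε j by linarith)
        filter_upwards [eventually_ge_atTop n₀] with n hn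
        have hle : 1/((n:ℝ)+1) ≤ 1/((n₀:ℝ)+1) := by
          apply one_div_le_one_div_of_le (by positivity)
          have := (Nat.cast_le (α := ℝ)).2 hn; linarith
        have hxθ : gp F θ ε j + 1/(n+1) ≤ θ := by linarith
        -- this point is > sSup so not in the defining set
        by_contra hcon
        push_neg at hcon
        have hmem : gp F θ ε j + 1/((n:ℝ)+1) ∈ gpS F θ ε j :=
          mem_gpS hxθ hcon
        have := le_csSup (gp_mem_bdd hθ _) hmem
        have hpos : (0:ℝ) < 1/((n:ℝ)+1) := by positivity
        have : gp F θ ε j + 1/((n:ℝ)+1) ≤ gp F θ ε j := this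
        linarith
      exact ge_of_tendsto (cdf_tendsto_right μ F hF _) hev
    -- ∀ u < s (j+1), F u ≤ F 0 + (j+1) ε
    have hub : ∀ u < gp F θ ε (j+1), F u ≤ F 0 + (j+1) * ε := by
      intro u hu
      obtain ⟨x, hxmem, hux⟩ := exists_lt_of_lt_csSup (gpS_ne (j+1)) hu
      rcases hxmem with rfl | ⟨-, hFx⟩
      · have h0 := cdf_mono μ F hF (le_of_lt hux)
        have : (0:ℝ) ≤ (j+1 : ℕ) * ε := by positivity
        push_cast at this ⊢
        linarith
      · have := cdf_mono μ F hF (le_of_lt hux)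
        push_cast at hFx ⊢
        linarith
    have hFm : (μ (Iio (gp F θ ε (j+1)))).toReal ≤ F 0 + (j+1) * ε := by
      apply le_of_tendsto (cdf_tendsto_left μ F hF _)
      filter_upwards with n
      apply hub
      have : (0:ℝ) < 1/((n:ℝ)+1) := by positivity
      linarith
    push_cast at hFm
    linarith

end Grid



section SLLN

variable {Ω : Type*} [MeasurableSpace Ω] (P : Measure Ω) [IsProbabilityMeasure P]
  (X Y C : ℕ → Ω → ℝ)
  (hX : ∀ i, Measurable (X i)) (hY : ∀ i, Measurable (Y i)) (hC : ∀ i, Measurable (C i))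
  (hiid : iIndepFun (fun i ω => (X i ω, Y i ω, C i ω)) P)
  (hident : ∀ i, Measure.map (fun ω => (X i ω, Y i ω, C i ω)) P
      = Measure.map (fun ω => (X 0 ω, Y 0 ω, C 0 ω)) P)
  (hmut : iIndepFun ![X 0, Y 0, C 0] P)
  (G : ℝ → ℝ) (hG : ∀ t, G t = (P {ω | C 0 ω ≤ t}).toReal)
  (θ : ℝ) (hGθ : G θ < 1)

variable (cdf_mono' : Monotone G)

include hX hY hC hiid hident hmut hG hGθ in
lemma slln (p : ℝ → Prop) [DecidablePred p] (hs : MeasurableSet {x | p x})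
    (hsub : ∀ x, p x → x ≤ θ) :
    ∀ᵐ ω ∂P, Tendsto (fun n : ℕ => (∑ i ∈ Finset.range n,
        (if p (X i ω) then (if min (X i ω) (Y i ω) ≤ C i ω then (1:ℝ) else 0)
          / (1 - leftLim G (min (min (X i ω) (Y i ω)) (C i ω))) else 0)) / n)
      atTop (𝓝 ((P {ω | p (X 0 ω)}).toReal)) := by
  classical
  -- the pushforward law of `C 0`
  set μC : Measure ℝ := P.map (C 0) with hμC
  have : IsProbabilityMeasure μC := Measure.isProbabilityMeasure_map (hC 0).aemeasurable
  have hGiic : ∀ t, G t = (μC (Iic t)).toReal := by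
    intro t
    rw [hG t, hμC, Measure.map_apply (hC 0) measurableSet_Iic]
    rfl
  have Gmono : Monotone G := cdf_mono μC G hGiic
  have hlG : ∀ z, leftLim G z = (μC (Iio z)).toReal := cdf_leftLim μC G hGiic
  have lGmono : Monotone (leftLim G) := by
    intro a b hab
    rcases eq_or_lt_of_le hab with rfl | h
    · exact le_rfl
    · exact (Gmono.leftLim_le le_rfl).trans (Gmono.le_leftLim h)
  have lGle : ∀ z, leftLim G z ≤ G z := fun z => Gmono.leftLim_le le_rfl
  have lGle1 : ∀ z, leftLim G z ≤ 1 := by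
    intro z; rw [hlG]
    exact ENNReal.toReal_le_of_le_ofReal one_pos.le (by simpa using prob_le_one)
  have lGmeas : Measurable (leftLim G) := lGmono.measurable
  -- the function applied to each triple
  set φ : ℝ × ℝ × ℝ → ℝ := fun v =>
    if p v.1 then (if min v.1 v.2.1 ≤ v.2.2 then (1:ℝ) else 0)
      / (1 - leftLim G (min (min v.1 v.2.1) v.2.2)) else 0 with hφ
  have mφ : Measurable φ := by
    apply Measurable.ite (measurable_fst hs)
    · apply Measurable.div
      · exact Measurable.ite (measurableSet_le (measurable_fst.min measurable_snd.fst)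
          measurable_snd.snd) measurable_const measurable_const
      · exact measurable_const.sub (lGmeas.comp
          ((measurable_fst.min measurable_snd.fst).min measurable_snd.snd))
    · exact measurable_const
  -- bounds
  set B : ℝ := (1 - G θ)⁻¹ with hB
  have hBpos : 0 < B := by rw [hB, inv_pos]; linarith
  have φnonneg : ∀ v, 0 ≤ φ v := by
    intro v
    rw [hφ]
    dsimp only
    split_ifs with h1 h2
    · apply div_nonneg zero_le_one
      linarith [lGle1 (min (min v.1 v.2.1) v.2.2)]
    · simp
    · exact le_rfl
  have φle : ∀ v, φ v ≤ B := by
    intro v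
    rw [hφ]
    dsimp only
    split_ifs with h1 h2
    · have hz : min v.1 v.2.1 ≤ θ := le_trans (min_le_left _ _) (hsub _ h1)
      have hminc : min (min v.1 v.2.1) v.2.2 = min v.1 v.2.1 := min_eq_left h2
      rw [hminc]
      have h3 : leftLim G (min v.1 v.2.1) ≤ G θ := le_trans (lGle _) (Gmono hz)
      have h4 : 0 < 1 - leftLim G (min v.1 v.2.1) := by linarith
      rw [hB, inv_eq_one_div]
      exact one_div_le_one_div_of_le (by linarith) (by linarith)
    · simp [hBpos.le]
    · exact hBpos.le
  -- the sequence of random variables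
  set V : ℕ → Ω → ℝ × ℝ × ℝ := fun i ω => (X i ω, Y i ω, C i ω) with hV
  have mV : ∀ i, Measurable (V i) := fun i => ((hX i).prodMk ((hY i).prodMk (hC i)))
  set ζ : ℕ → Ω → ℝ := fun i ω => φ (V i ω) with hζ
  have mζ : ∀ i, Measurable (ζ i) := fun i => mφ.comp (mV i)
  have hint : Integrable (ζ 0) P := by
    refine (integrable_const B).mono' (mζ 0).aestronglyMeasurable ?_
    filter_upwards with ω
    rw [Real.norm_eq_abs, abs_of_nonneg (φnonneg _)]
    exact φle _
  have hindep : Pairwise ((IndepFun · · P) on ζ) := by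
    intro i j hij
    exact (hiid.indepFun hij).comp mφ mφ
  have hidζ : ∀ i, IdentDistrib (ζ i) (ζ 0) P P := by
    intro i
    have h1 : IdentDistrib (V i) (V 0) P P :=
      ⟨(mV i).aemeasurable, (mV 0).aemeasurable, hident i⟩
    exact h1.comp mφ
  have hlaw := strong_law_ae_real ζ hint hindep hidζ
  -- compute the expectation
  have hexp : (P[ζ 0]) = (P {ω | p (X 0 ω)}).toReal := by
    -- rewrite via product structure
    set A : Ω → ℝ × ℝ := fun ω => (X 0 ω, Y 0 ω) with hA
    have mA : Measurable A := (hX 0).prodMk (hY 0)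
    set ψ : (ℝ × ℝ) × ℝ → ℝ := fun q =>
      if p q.1.1 then (if min q.1.1 q.1.2 ≤ q.2 then (1:ℝ) else 0)
        / (1 - leftLim G (min (min q.1.1 q.1.2) q.2)) else 0 with hψ
    have mψ : Measurable ψ := by
      apply Measurable.ite (measurable_fst.comp measurable_fst hs)
      · apply Measurable.div
        · exact Measurable.ite (measurableSet_le
            ((measurable_fst.comp measurable_fst).min (measurable_snd.comp measurable_fst))
            measurable_snd) measurable_const measurable_const
        · exact measurable_const.sub (lGmeas.comp
            (((measurable_fst.comp measurable_fst).min
              (measurable_snd.comp measurable_fst)).min measurable_snd))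
      · exact measurable_const
    have hζψ : ∀ ω, ζ 0 ω = ψ (A ω, C 0 ω) := fun ω => rfl
    -- independence of the pair and C 0
    have hAC : IndepFun A (C 0) P := by
      have hmeas3 : ∀ i, Measurable (![X 0, Y 0, C 0] i) := by
        intro i
        fin_cases i <;> simp [hX 0, hY 0, hC 0]
      have h := hmut.indepFun_prodMk hmeas3 0 1 2 (by decide) (by decide)
      simpa [hA] using h
    have hmap : P.map (fun ω => (A ω, C 0 ω)) = (P.map A).prod (P.map (C 0)) :=
      (indepFun_iff_map_prod_eq_prod_map_map mA.aemeasurable (hC 0).aemeasurable).1 hAC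
    set μA : Measure (ℝ × ℝ) := P.map A with hμA
    have : IsProbabilityMeasure μA := Measure.isProbabilityMeasure_map mA.aemeasurable
    have step1 : (P[ζ 0]) = ∫ p, ψ p ∂(μA.prod μC) := by
      have h1 : (P[ζ 0]) = ∫ ω, ψ (A ω, C 0 ω) ∂P := by
        apply integral_congr_ae
        filter_upwards with ω using hζψ ω
      rw [h1, ← integral_map (mA.prodMk (hC 0)).aemeasurable mψ.aestronglyMeasurable, hmap]
    have hint2 : Integrable ψ (μA.prod μC) := by
      refine (integrable_const B).mono' mψ.aestronglyMeasurable ?_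
      filter_upwards with p
      rw [Real.norm_eq_abs]
      have h1 : ψ p = φ (p.1.1, p.1.2, p.2) := rfl
      rw [h1, abs_of_nonneg (φnonneg _)]
      exact φle _
    have step2 : ∫ p, ψ p ∂(μA.prod μC) = ∫ a, (∫ c, ψ (a, c) ∂μC) ∂μA :=
      integral_prod ψ hint2
    have inner : ∀ a : ℝ × ℝ, (∫ c, ψ (a, c) ∂μC) = if p a.1 then (1:ℝ) else 0 := by
      intro a
      by_cases hx : p a.1
      · simp only [hψ, hx, if_true]
        set z : ℝ := min a.1 a.2 with hz
        have hzθ : z ≤ θ := le_trans (min_le_left _ _) (hsub _ hx)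
        have hlGz : leftLim G z < 1 := lt_of_le_of_lt (le_trans (lGle z) (Gmono hzθ)) hGθ
        have hfun : ∀ c : ℝ, (if min a.1 a.2 ≤ c then (1:ℝ) else 0)
            / (1 - leftLim G (min (min a.1 a.2) c))
            = Set.indicator (Ici z) (fun _ => (1 - leftLim G z)⁻¹) c := by
          intro c
          by_cases hzc : z ≤ c
          · rw [Set.indicator_of_mem (mem_Ici.2 hzc)]
            rw [if_pos hzc, min_eq_left hzc, one_div]
          · rw [Set.indicator_of_notMem (fun h => hzc (mem_Ici.1 h))]
            rw [if_neg hzc]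
            simp
        calc (∫ c, (if min a.1 a.2 ≤ c then (1:ℝ) else 0)
              / (1 - leftLim G (min (min a.1 a.2) c)) ∂μC)
            = ∫ c, Set.indicator (Ici z) (fun _ => (1 - leftLim G z)⁻¹) c ∂μC := by
              exact integral_congr_ae (Filter.Eventually.of_forall hfun)
          _ = (μC (Ici z)).toReal • (1 - leftLim G z)⁻¹ :=
              integral_indicator_const _ measurableSet_Ici
          _ = (1 - leftLim G z) * (1 - leftLim G z)⁻¹ := by
              congr 1
              have h1 : μC (Ici z) = 1 - μC (Iio z) := by
                rw [← compl_Iio]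
                rw [measure_compl measurableSet_Iio (measure_ne_top μC _)]
                simp
              rw [h1, ENNReal.toReal_sub_of_le (by simpa using prob_le_one) ENNReal.one_ne_top]
              rw [ENNReal.toReal_one, hlG z]
          _ = 1 := mul_inv_cancel₀ (by linarith)
      · simp only [hψ, hx, if_false]
        simp
    have outer : ∫ a, (∫ c, ψ (a, c) ∂μC) ∂μA = (μA {a : ℝ × ℝ | p a.1}).toReal := by
      rw [integral_congr_ae (Filter.Eventually.of_forall inner)]
      have h1 : ∀ a : ℝ × ℝ, (if p a.1 then (1:ℝ) else 0)
          = Set.indicator {a : ℝ × ℝ | p a.1} (fun _ => (1:ℝ)) a := by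
        intro a
        by_cases h : p a.1
        · rw [Set.indicator_of_mem (show a ∈ {a : ℝ × ℝ | p a.1} from h), if_pos h]
        · rw [Set.indicator_of_notMem (show a ∉ {a : ℝ × ℝ | p a.1} from h), if_neg h]
      rw [integral_congr_ae (Filter.Eventually.of_forall h1)]
      rw [integral_indicator_const (1:ℝ) (show MeasurableSet {a : ℝ × ℝ | p a.1} from measurable_fst hs)]
      simp
      rfl
    have final : μA {a : ℝ × ℝ | p a.1} = P {ω | p (X 0 ω)} := by
      rw [hμA, Measure.map_apply mA (show MeasurableSet {a : ℝ × ℝ | p a.1} from measurable_fst hs)]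
      rfl
    rw [step1, step2, outer, final]
  rw [hexp] at hlaw
  exact hlaw

end SLLN



/-- Deterministic chaining bound over a quantile grid. -/
lemma sup_bound (S Sm F Fm : ℝ → ℝ) (θ ε : ℝ) (s : ℕ → ℝ) (m : ℕ)
    (hs0 : s 0 = 0) (hsm : s m = θ)
    (hFmono : Monotone F)
    (hincr : ∀ j, Fm (s (j+1)) ≤ F (s j) + ε)
    (hSm : ∀ t u, t < u → S t ≤ Sm u)
    (hSmono : Monotone S)
    (hFFm : ∀ t u, t < u → F t ≤ Fm u)
    (hgrid : ∀ j ≤ m, |S (s j) - F (s j)| ≤ ε ∧ |Sm (s j) - Fm (s j)| ≤ ε)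
    (hεpos : 0 ≤ ε) :
    ∀ t ∈ Icc (0:ℝ) θ, |S t - F t| ≤ 2 * ε := by
  rintro t ⟨ht0, htθ⟩
  rcases eq_or_lt_of_le htθ with h | htθ'
  · subst h
    rw [← hsm]
    have := (hgrid m le_rfl).1
    linarith [abs_nonneg (S (s m) - F (s m))]
  · classical
    set j := Nat.findGreatest (fun i => s i ≤ t) m with hj
    have hp0 : s 0 ≤ t := by rw [hs0]; exact ht0
    have hjle : j ≤ m := Nat.findGreatest_le m
    have hsjt : s j ≤ t := Nat.findGreatest_spec (P := fun i => s i ≤ t) (Nat.zero_le m) hp0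
    have hjm : j < m := by
      rcases lt_or_eq_of_le hjle with h | h
      · exact h
      · exfalso
        rw [h, hsm] at hsjt
        linarith
    have htj1 : t < s (j+1) := by
      by_contra hcon
      push_neg at hcon
      exact Nat.findGreatest_is_greatest (P := fun i => s i ≤ t) (Nat.lt_succ_self j) (by omega) hcon
    have h1 := (hgrid j hjle).1
    have h2 := (hgrid (j+1) (by omega)).2
    have a1 : S t ≤ Sm (s (j+1)) := hSm t _ htj1
    have a2 : F (s j) ≤ F t := hFmono hsjt
    have a3 : Sm (s (j+1)) - Fm (s (j+1)) ≤ ε := (abs_le.1 h2).2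
    have b1 : S (s j) ≤ S t := hSmono hsjt
    have b2 : F t ≤ Fm (s (j+1)) := hFFm t _ htj1
    have b3 : -ε ≤ S (s j) - F (s j) := (abs_le.1 h1).1
    have a4 := hincr j
    rw [abs_le]
    constructor <;> linarith


end OracleIPCW

open OracleIPCW

/-- Lemma 3.4, oracle IPCW consistency with the true censoring cdf.
Under entirely random contamination and right-censoring, for every `θ` with `H(θ) < 1`,
`sup_{0 ≤ t ≤ θ} |(1/n) ∑ᵢ 1_{Xᵢ ≤ t} δᵢ / (1 − G(Wᵢ−)) − F(t)| → 0` almost surely. -/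
theorem oracle_ipcw_uniform_consistency
    {Ω : Type*} [MeasurableSpace Ω] (P : Measure Ω) [IsProbabilityMeasure P]
    (X Y C : ℕ → Ω → ℝ)
    (hX : ∀ i, Measurable (X i)) (hY : ∀ i, Measurable (Y i)) (hC : ∀ i, Measurable (C i))
    (hXnn : ∀ i ω, 0 ≤ X i ω) (hYnn : ∀ i ω, 0 ≤ Y i ω) (hCnn : ∀ i ω, 0 ≤ C i ω)
    -- the triples `(Xᵢ, Yᵢ, Cᵢ)` are iid
    (hiid : iIndepFun (fun i ω => (X i ω, Y i ω, C i ω)) P)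
    (hident : ∀ i, Measure.map (fun ω => (X i ω, Y i ω, C i ω)) P
      = Measure.map (fun ω => (X 0 ω, Y 0 ω, C 0 ω)) P)
    -- entirely random contamination and right-censoring: `X`, `Y`, `C` mutually independent
    (hmut : iIndepFun ![X 0, Y 0, C 0] P)
    (W : ℕ → Ω → ℝ) (hW : ∀ i ω, W i ω = min (min (X i ω) (Y i ω)) (C i ω))
    (δ : ℕ → Ω → ℝ) (hδ : ∀ i ω, δ i ω = if min (X i ω) (Y i ω) ≤ C i ω then 1 else 0)
    (F : ℝ → ℝ) (hF : ∀ t, F t = (P {ω | X 0 ω ≤ t}).toReal)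
    (G : ℝ → ℝ) (hG : ∀ t, G t = (P {ω | C 0 ω ≤ t}).toReal)
    (H : ℝ → ℝ) (hH : ∀ t, H t = (P {ω | W 0 ω ≤ t}).toReal) :
    ∀ θ : ℝ, H θ < 1 →
      ∀ᵐ ω ∂P, Tendsto
        (fun n : ℕ => ⨆ t ∈ Icc (0 : ℝ) θ,
          |(n : ℝ)⁻¹ * ∑ i ∈ Finset.range n,
              (if X i ω ≤ t then δ i ω / (1 - leftLim G (W i ω)) else 0) - F t|)
        atTop (𝓝 0) := by
  intro θ hHθ
  by_cases hθ0 : 0 ≤ θ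
  swap
  · -- degenerate case: the interval is empty and the supremum vanishes
    refine Filter.Eventually.of_forall (fun ω => ?_)
    have hempty : Icc (0:ℝ) θ = ∅ := Icc_eq_empty (by intro h; exact hθ0 (le_trans le_rfl h))
    have hzero : (fun n : ℕ => ⨆ t ∈ Icc (0 : ℝ) θ,
        |(n : ℝ)⁻¹ * ∑ i ∈ Finset.range n,
            (if X i ω ≤ t then δ i ω / (1 - leftLim G (W i ω)) else 0) - F t|)
        = fun _ : ℕ => (0:ℝ) := by
      funext n
      rw [hempty]
      have h1 : ∀ t : ℝ, (⨆ _ : t ∈ (∅ : Set ℝ),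
          |(n : ℝ)⁻¹ * ∑ i ∈ Finset.range n,
              (if X i ω ≤ t then δ i ω / (1 - leftLim G (W i ω)) else 0) - F t|) = 0 :=
        fun t => @Real.iSup_of_isEmpty (t ∈ (∅ : Set ℝ)) ⟨fun h => h⟩ _
      rw [iSup_congr h1]
      exact Real.iSup_const_zero
    rw [hzero]
    exact tendsto_const_nhds
  -- main case `0 ≤ θ`
  have hGθ : G θ < 1 := by
    refine lt_of_le_of_lt ?_ hHθ
    rw [hG, hH]
    refine ENNReal.toReal_mono (measure_ne_top P _) (measure_mono ?_)
    intro ω hω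
    simp only [Set.mem_setOf_eq] at hω ⊢
    rw [hW]
    exact le_trans (min_le_right _ _) hω
  -- cdf facts for `G`
  have hμCinst : IsProbabilityMeasure (P.map (C 0)) :=
    Measure.isProbabilityMeasure_map (hC 0).aemeasurable
  have hGiic : ∀ t, G t = ((P.map (C 0)) (Iic t)).toReal := by
    intro t
    rw [hG t, Measure.map_apply (hC 0) measurableSet_Iic]
    rfl
  have Gmono : Monotone G := cdf_mono (P.map (C 0)) G hGiic
  have lGle1 : ∀ z, leftLim G z ≤ 1 := by
    intro z
    refine le_trans (Gmono.leftLim_le le_rfl) (cdf_le_one (P.map (C 0)) G hGiic z)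
  -- cdf facts for `F`
  have hμXinst : IsProbabilityMeasure (P.map (X 0)) :=
    Measure.isProbabilityMeasure_map (hX 0).aemeasurable
  have hFx : ∀ t, F t = ((P.map (X 0)) (Iic t)).toReal := by
    intro t
    rw [hF t, Measure.map_apply (hX 0) measurableSet_Iic]
    rfl
  have Fmono : Monotone F := cdf_mono (P.map (X 0)) F hFx
  have hFFm : ∀ t u : ℝ, t < u → F t ≤ ((P.map (X 0)) (Iio u)).toReal := by
    intro t u htu
    rw [hFx]
    exact ENNReal.toReal_mono (measure_ne_top _ _)
      (measure_mono (Iic_subset_Iio.2 htu))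
  -- pointwise strong laws at a fixed level `u ≤ θ`
  have hae1 : ∀ u : ℝ, u ≤ θ → ∀ᵐ ω ∂P, Tendsto
      (fun n : ℕ => (n : ℝ)⁻¹ * ∑ i ∈ Finset.range n,
        (if X i ω ≤ u then δ i ω / (1 - leftLim G (W i ω)) else 0))
      atTop (𝓝 (F u)) := by
    intro u hu
    have h := slln P X Y C hX hY hC hiid hident hmut G hG θ hGθ
      (fun x => x ≤ u) measurableSet_Iic (fun x hx => le_trans hx hu)
    filter_upwards [h] with ω hω
    rw [show (P {ω' | (fun x => x ≤ u) (X 0 ω')}).toReal = F u from (hF u).symm] at hω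
    have heq : (fun n : ℕ => (n : ℝ)⁻¹ * ∑ i ∈ Finset.range n,
        (if X i ω ≤ u then δ i ω / (1 - leftLim G (W i ω)) else 0))
        = fun n : ℕ => (∑ i ∈ Finset.range n,
          (if X i ω ≤ u then (if min (X i ω) (Y i ω) ≤ C i ω then (1:ℝ) else 0)
            / (1 - leftLim G (min (min (X i ω) (Y i ω)) (C i ω))) else 0)) / n := by
      funext n
      rw [div_eq_mul_inv, mul_comm]
      congr 1
      refine Finset.sum_congr rfl (fun i _ => ?_)
      rw [hδ, hW]
    rw [heq]
    exact hω
  have hae2 : ∀ u : ℝ, u ≤ θ → ∀ᵐ ω ∂P, Tendsto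
      (fun n : ℕ => (n : ℝ)⁻¹ * ∑ i ∈ Finset.range n,
        (if X i ω < u then δ i ω / (1 - leftLim G (W i ω)) else 0))
      atTop (𝓝 (((P.map (X 0)) (Iio u)).toReal)) := by
    intro u hu
    have h := slln P X Y C hX hY hC hiid hident hmut G hG θ hGθ
      (fun x => x < u) measurableSet_Iio (fun x hx => le_trans (le_of_lt hx) hu)
    filter_upwards [h] with ω hω
    rw [show (P {ω' | (fun x => x < u) (X 0 ω')}).toReal = ((P.map (X 0)) (Iio u)).toReal by
      rw [Measure.map_apply (hX 0) measurableSet_Iio]; rfl] at hω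
    have heq : (fun n : ℕ => (n : ℝ)⁻¹ * ∑ i ∈ Finset.range n,
        (if X i ω < u then δ i ω / (1 - leftLim G (W i ω)) else 0))
        = fun n : ℕ => (∑ i ∈ Finset.range n,
          (if X i ω < u then (if min (X i ω) (Y i ω) ≤ C i ω then (1:ℝ) else 0)
            / (1 - leftLim G (min (min (X i ω) (Y i ω)) (C i ω))) else 0)) / n := by
      funext n
      rw [div_eq_mul_inv, mul_comm]
      congr 1
      refine Finset.sum_congr rfl (fun i _ => ?_)
      rw [hδ, hW]
    rw [heq]
    exact hω
  -- the combined almost sure event, over all grid scales and grid points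
  have hmain : ∀ᵐ ω ∂P, ∀ k : ℕ, ∀ j : ℕ,
      Tendsto (fun n : ℕ => (n : ℝ)⁻¹ * ∑ i ∈ Finset.range n,
        (if X i ω ≤ gp F θ (1/((k:ℝ)+1)) j then δ i ω / (1 - leftLim G (W i ω)) else 0))
        atTop (𝓝 (F (gp F θ (1/((k:ℝ)+1)) j))) ∧
      Tendsto (fun n : ℕ => (n : ℝ)⁻¹ * ∑ i ∈ Finset.range n,
        (if X i ω < gp F θ (1/((k:ℝ)+1)) j then δ i ω / (1 - leftLim G (W i ω)) else 0))
        atTop (𝓝 (((P.map (X 0)) (Iio (gp F θ (1/((k:ℝ)+1)) j))).toReal)) := by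
    rw [ae_all_iff]
    intro k
    rw [ae_all_iff]
    intro j
    exact (hae1 _ (gp_le_theta hθ0 j)).and (hae2 _ (gp_le_theta hθ0 j))
  filter_upwards [hmain] with ω hω
  rw [NormedAddCommGroup.tendsto_nhds_zero]
  intro ε' hε'
  obtain ⟨k, hk⟩ := exists_nat_gt (2 / ε')
  have hkpos : (0:ℝ) < 1/((k:ℝ)+1) := by positivity
  have h2εk : 2 * (1/((k:ℝ)+1)) < ε' := by
    rw [mul_one_div, div_lt_iff₀ (by positivity)]
    rw [div_lt_iff₀ hε'] at hk
    nlinarith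
  have hmε : 1 < ((k+2 : ℕ):ℝ) * (1/((k:ℝ)+1)) := by
    push_cast
    rw [mul_one_div, lt_div_iff₀ (by positivity)]
    linarith
  -- eventual closeness at the grid points
  have hev : ∀ᶠ n : ℕ in atTop, ∀ j ∈ Set.Iic (k+2),
      |(n : ℝ)⁻¹ * ∑ i ∈ Finset.range n,
        (if X i ω ≤ gp F θ (1/((k:ℝ)+1)) j then δ i ω / (1 - leftLim G (W i ω)) else 0)
        - F (gp F θ (1/((k:ℝ)+1)) j)| ≤ 1/((k:ℝ)+1) ∧
      |(n : ℝ)⁻¹ * ∑ i ∈ Finset.range n,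
        (if X i ω < gp F θ (1/((k:ℝ)+1)) j then δ i ω / (1 - leftLim G (W i ω)) else 0)
        - ((P.map (X 0)) (Iio (gp F θ (1/((k:ℝ)+1)) j))).toReal| ≤ 1/((k:ℝ)+1) := by
    rw [eventually_all_finite (Set.finite_Iic (k+2))]
    intro j _
    have e1 : ∀ᶠ n : ℕ in atTop,
        |(n : ℝ)⁻¹ * ∑ i ∈ Finset.range n,
          (if X i ω ≤ gp F θ (1/((k:ℝ)+1)) j then δ i ω / (1 - leftLim G (W i ω)) else 0)
          - F (gp F θ (1/((k:ℝ)+1)) j)| ≤ 1/((k:ℝ)+1) := by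
      obtain ⟨N, hN⟩ := Metric.tendsto_atTop.1 (hω k j).1 _ hkpos
      filter_upwards [eventually_ge_atTop N] with n hn
      have := hN n hn
      rw [Real.dist_eq] at this
      exact le_of_lt this
    have e2 : ∀ᶠ n : ℕ in atTop,
        |(n : ℝ)⁻¹ * ∑ i ∈ Finset.range n,
          (if X i ω < gp F θ (1/((k:ℝ)+1)) j then δ i ω / (1 - leftLim G (W i ω)) else 0)
          - ((P.map (X 0)) (Iio (gp F θ (1/((k:ℝ)+1)) j))).toReal| ≤ 1/((k:ℝ)+1) := by
      obtain ⟨N, hN⟩ := Metric.tendsto_atTop.1 (hω k j).2 _ hkpos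
      filter_upwards [eventually_ge_atTop N] with n hn
      have := hN n hn
      rw [Real.dist_eq] at this
      exact le_of_lt this
    exact e1.and e2
  filter_upwards [hev] with n hn
  -- nonnegativity of the summands
  have val_nonneg : ∀ i : ℕ, 0 ≤ δ i ω / (1 - leftLim G (W i ω)) := by
    intro i
    apply div_nonneg
    · rw [hδ]; positivity
    · linarith [lGle1 (W i ω)]
  -- apply the chaining bound
  have key := sup_bound
    (fun t => (n : ℝ)⁻¹ * ∑ i ∈ Finset.range n,
      (if X i ω ≤ t then δ i ω / (1 - leftLim G (W i ω)) else 0))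
    (fun t => (n : ℝ)⁻¹ * ∑ i ∈ Finset.range n,
      (if X i ω < t then δ i ω / (1 - leftLim G (W i ω)) else 0))
    F (fun t => ((P.map (X 0)) (Iio t)).toReal) θ (1/((k:ℝ)+1))
    (gp F θ (1/((k:ℝ)+1))) (k+2)
    (gp_zero (P.map (X 0)) hFx hθ0) (gp_top (P.map (X 0)) hFx hθ0 hmε)
    Fmono
    (fun j => gp_increment (P.map (X 0)) hFx hθ0 hkpos j)
    (by
      intro t u htu
      refine mul_le_mul_of_nonneg_left ?_ (by positivity)
      refine Finset.sum_le_sum (fun i _ => ?_)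
      by_cases h1 : X i ω ≤ t
      · rw [if_pos h1, if_pos (lt_of_le_of_lt h1 htu)]
      · rw [if_neg h1]
        by_cases h2 : X i ω < u
        · rw [if_pos h2]; exact val_nonneg i
        · rw [if_neg h2])
    (by
      intro t u htu
      refine mul_le_mul_of_nonneg_left ?_ (by positivity)
      refine Finset.sum_le_sum (fun i _ => ?_)
      by_cases h1 : X i ω ≤ t
      · rw [if_pos h1, if_pos (le_trans h1 htu)]
      · rw [if_neg h1]
        by_cases h2 : X i ω ≤ u
        · rw [if_pos h2]; exact val_nonneg i
        · rw [if_neg h2])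
    (fun t u htu => hFFm t u htu)
    (fun j hj => hn j hj)
    (le_of_lt hkpos)
  -- conclude
  have hsup_le : (⨆ t ∈ Icc (0 : ℝ) θ,
      |(n : ℝ)⁻¹ * ∑ i ∈ Finset.range n,
        (if X i ω ≤ t then δ i ω / (1 - leftLim G (W i ω)) else 0) - F t|)
      ≤ 2 * (1/((k:ℝ)+1)) := by
    refine Real.iSup_le (fun t => ?_) (by positivity)
    refine Real.iSup_le (fun ht => ?_) (by positivity)
    exact key t ht
  have hsup_nonneg : 0 ≤ ⨆ t ∈ Icc (0 : ℝ) θ,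
      |(n : ℝ)⁻¹ * ∑ i ∈ Finset.range n,
        (if X i ω ≤ t then δ i ω / (1 - leftLim G (W i ω)) else 0) - F t| :=
    Real.iSup_nonneg fun t => Real.iSup_nonneg fun _ => abs_nonneg _
  rw [Real.norm_eq_abs, abs_of_nonneg hsup_nonneg]
  exact lt_of_le_of_lt hsup_le h2εk
end

section
/- Under entirely random right-censoring (X independent of C), with F, G, H the cdfs of X, C, W = X ∧ C respectively, it holds that (1 − F(t))(1 − G(t)) = 1 − H(t) for all t ≥ 0, and F(t) = ∫_{[0,t]} (1 − G(s−))^{-1} dH_1(s) for all 0 ≤ t < G^{-1}(1), where H_1(t) = P(W ≤ t, W = X). -/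
open MeasureTheory ProbabilityTheory Filter Set Function
open scoped Topology ENNReal

lemma leftLim_toReal_Iic (μ : Measure ℝ) [IsFiniteMeasure μ] (x : ℝ) :
    leftLim (fun t => (μ (Iic t)).toReal) x = (μ (Iio x)).toReal := by
  set g : ℝ → ℝ := fun t => (μ (Iic t)).toReal with hg
  have hmono : Monotone g := fun a b hab =>
    ENNReal.toReal_mono (measure_ne_top _ _) (measure_mono (Iic_subset_Iic.2 hab))
  set u : ℕ → ℝ := fun n => x - 1 / (n + 1) with hu
  have hun : ∀ n : ℕ, u n < x := by
    intro n
    have : (0:ℝ) < 1 / (n + 1) := by positivity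
    simp only [hu]; linarith
  have humono : Monotone u := by
    intro a b hab
    have h1 : (1:ℝ) / (b + 1) ≤ 1 / (a + 1) := by
      apply one_div_le_one_div_of_le (by positivity)
      exact_mod_cast Nat.succ_le_succ hab
    simp only [hu]; linarith
  have hulim : Tendsto u atTop (𝓝 x) := by
    have h : Tendsto (fun n : ℕ => 1 / ((n : ℝ) + 1)) atTop (𝓝 0) := tendsto_one_div_add_atTop_nhds_zero_nat
    have := tendsto_const_nhds (x := x) (f := atTop (α := ℕ)) |>.sub h
    simpa [hu] using this
  have hulim' : Tendsto u atTop (𝓝[<] x) :=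
    tendsto_nhdsWithin_of_tendsto_nhds_of_eventually_within _ hulim
      (Eventually.of_forall hun)
  have h1 : Tendsto (fun n => g (u n)) atTop (𝓝 (leftLim g x)) :=
    (hmono.tendsto_leftLim x).comp hulim'
  have hUnion : ⋃ n, Iic (u n) = Iio x := by
    ext y
    simp only [mem_iUnion, mem_Iic, mem_Iio]
    constructor
    · rintro ⟨n, hn⟩; exact hn.trans_lt (hun n)
    · intro hy
      obtain ⟨n, hn⟩ := exists_nat_one_div_lt (sub_pos.2 hy)
      exact ⟨n, by simp only [hu]; linarith⟩
  have h2 : Tendsto (fun n => μ (Iic (u n))) atTop (𝓝 (μ (Iio x))) := by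
    have := tendsto_measure_iUnion_atTop (μ := μ)
      (s := fun n => Iic (u n)) (fun a b hab => Iic_subset_Iic.2 (humono hab))
    rwa [hUnion] at this
  have h2' : Tendsto (fun n => g (u n)) atTop (𝓝 ((μ (Iio x)).toReal)) :=
    (ENNReal.tendsto_toReal (measure_ne_top μ _)).comp h2
  exact tendsto_nhds_unique h1 h2'

/-- identities (2.3) and (2.5). Under entirely random right-censoring,
`(1 − F)(1 − G) = 1 − H`, and `F(t) = ∫_{[0,t]} (1 − G(s−))⁻¹ dH₁(s)` for `t < G⁻¹(1)`,
where `H₁(dt)` is the law of `W` restricted to `{W = X} = {X ≤ C}`. -/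
theorem ipcw_representation_of_F
    {Ω : Type*} [MeasurableSpace Ω] (P : Measure Ω) [IsProbabilityMeasure P]
    (X C : Ω → ℝ)
    (hX : Measurable X) (hC : Measurable C)
    (hXnn : ∀ ω, 0 ≤ X ω)
    -- entirely random right-censoring
    (hindep : IndepFun X C P)
    (F : ℝ → ℝ) (hF : ∀ t, F t = (P {ω | X ω ≤ t}).toReal)
    (G : ℝ → ℝ) (hG : ∀ t, G t = (P {ω | C ω ≤ t}).toReal)
    (H : ℝ → ℝ) (hH : ∀ t, H t = (P {ω | min (X ω) (C ω) ≤ t}).toReal) :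
    (∀ t : ℝ, (1 - F t) * (1 - G t) = 1 - H t)
    ∧ (∀ t : ℝ, 0 ≤ t → G t < 1 →
        F t = ∫ s in Icc (0 : ℝ) t, (1 - leftLim G s)⁻¹
          ∂(Measure.map (fun ω => min (X ω) (C ω)) (P.restrict {ω | X ω ≤ C ω}))) := by
  have hcompl : ∀ s : Set Ω, MeasurableSet s → (P sᶜ).toReal = 1 - (P s).toReal := by
    intro s hs
    rw [measure_compl hs (measure_ne_top _ _), measure_univ,
      ENNReal.toReal_sub_of_le prob_le_one ENNReal.one_ne_top, ENNReal.toReal_one]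
  constructor
  · -- Part 1
    intro t
    have hmul := hindep.measure_inter_preimage_eq_mul (Ioi t) (Ioi t)
      measurableSet_Ioi measurableSet_Ioi
    have h1 : {ω | X ω ≤ t}ᶜ = X ⁻¹' Ioi t := by ext ω; simp [not_le]
    have h2 : {ω | C ω ≤ t}ᶜ = C ⁻¹' Ioi t := by ext ω; simp [not_le]
    have h3 : {ω | min (X ω) (C ω) ≤ t}ᶜ = X ⁻¹' Ioi t ∩ C ⁻¹' Ioi t := by
      ext ω; simp [not_le, lt_min_iff]
    have e1 : 1 - F t = (P (X ⁻¹' Ioi t)).toReal := by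
      rw [hF, ← hcompl {ω | X ω ≤ t} (measurableSet_le hX measurable_const), h1]
    have e2 : 1 - G t = (P (C ⁻¹' Ioi t)).toReal := by
      rw [hG, ← hcompl {ω | C ω ≤ t} (measurableSet_le hC measurable_const), h2]
    have e3 : 1 - H t = (P (X ⁻¹' Ioi t ∩ C ⁻¹' Ioi t)).toReal := by
      rw [hH, ← hcompl {ω | min (X ω) (C ω) ≤ t} (measurableSet_le (hX.min hC) measurable_const), h3]
    rw [e1, e2, e3, hmul, ENNReal.toReal_mul]
  · -- Part 2
    intro t ht0 htG
    set W : Ω → ℝ := fun ω => min (X ω) (C ω) with hW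
    have hWm : Measurable W := hX.min hC
    set μX : Measure ℝ := P.map X with hμX
    set μC : Measure ℝ := P.map C with hμC
    have hPX : IsProbabilityMeasure μX := Measure.isProbabilityMeasure_map hX.aemeasurable
    have hPC : IsProbabilityMeasure μC := Measure.isProbabilityMeasure_map hC.aemeasurable
    -- G in terms of μC
    have hGμ : ∀ s, G s = (μC (Iic s)).toReal := by
      intro s
      rw [hG, hμC, Measure.map_apply hC measurableSet_Iic]
      rfl
    have hGfun : G = fun s => (μC (Iic s)).toReal := funext hGμ
    have hGmono : Monotone G := by
      rw [hGfun]
      exact fun a b hab =>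
        ENNReal.toReal_mono (measure_ne_top _ _) (measure_mono (Iic_subset_Iic.2 hab))
    have hleftLim : ∀ s, leftLim G s = (μC (Iio s)).toReal := by
      intro s; rw [hGfun]; exact leftLim_toReal_Iic μC s
    -- the restricted map measure as withDensity
    have hXC : MeasurableSet {ω | X ω ≤ C ω} := measurableSet_le hX hC
    set f : ℝ → NNReal := fun x => (μC (Ici x)).toNNReal with hf
    have hfanti : Antitone f := by
      intro a b hab
      exact ENNReal.toNNReal_mono (measure_ne_top _ _) (measure_mono (Ici_subset_Ici.2 hab))
    have hfm : Measurable f := hfanti.measurable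
    have hcoe : ∀ x, (f x : ℝ≥0∞) = μC (Ici x) := fun x =>
      ENNReal.coe_toNNReal (measure_ne_top _ _)
    have hkey : Measure.map W (P.restrict {ω | X ω ≤ C ω})
        = μX.withDensity (fun x => (f x : ℝ≥0∞)) := by
      ext A hA
      rw [Measure.map_apply hWm hA, Measure.restrict_apply (hWm hA)]
      have hset : W ⁻¹' A ∩ {ω | X ω ≤ C ω}
          = (fun ω => (X ω, C ω)) ⁻¹' {p : ℝ × ℝ | p.1 ∈ A ∧ p.1 ≤ p.2} := by
        ext ω
        simp only [mem_inter_iff, mem_preimage, mem_setOf_eq, hW]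
        constructor
        · rintro ⟨h1, h2⟩
          rw [min_eq_left h2] at h1
          exact ⟨h1, h2⟩
        · rintro ⟨h1, h2⟩
          exact ⟨by rwa [min_eq_left h2], h2⟩
      have hS : MeasurableSet {p : ℝ × ℝ | p.1 ∈ A ∧ p.1 ≤ p.2} :=
        (measurable_fst hA).inter (measurableSet_le measurable_fst measurable_snd)
      have hprod : P.map (fun ω => (X ω, C ω)) = μX.prod μC :=
        (indepFun_iff_map_prod_eq_prod_map_map hX.aemeasurable hC.aemeasurable).mp hindep
      rw [hset, ← Measure.map_apply (hX.prodMk hC) hS, hprod,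
        Measure.prod_apply hS, withDensity_apply _ hA,
        ← lintegral_indicator hA (fun x => (f x : ℝ≥0∞))]
      refine lintegral_congr fun x => ?_
      by_cases hx : x ∈ A
      · rw [indicator_of_mem hx, hcoe]
        congr 1
        ext c
        simp [hx]
      · rw [indicator_of_notMem hx]
        have : Prod.mk x ⁻¹' {p : ℝ × ℝ | p.1 ∈ A ∧ p.1 ≤ p.2} = ∅ := by
          ext c; simp [hx]
        rw [this, measure_empty]
    -- now compute the integral
    have hcomplC : ∀ s : ℝ, (μC (Ici s)).toReal = 1 - (μC (Iio s)).toReal := by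
      intro s
      rw [← compl_Iio, measure_compl measurableSet_Iio (measure_ne_top _ _), measure_univ,
        ENNReal.toReal_sub_of_le prob_le_one ENNReal.one_ne_top, ENNReal.toReal_one]
    have hone : EqOn (fun s => f s • (1 - leftLim G s)⁻¹) (fun _ => (1:ℝ)) (Icc 0 t) := by
      intro s hs
      have hlt : leftLim G s < 1 :=
        lt_of_le_of_lt ((hGmono.leftLim_le (le_refl s)).trans (hGmono hs.2)) htG
      have hfr : (f s : ℝ) = 1 - leftLim G s := by
        have h1 : (f s : ℝ) = (μC (Ici s)).toReal := rfl
        rw [h1, hcomplC, hleftLim]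
      show f s • (1 - leftLim G s)⁻¹ = 1
      rw [NNReal.smul_def, hfr]
      exact mul_inv_cancel₀ (by linarith)
    have hIio0 : μX (Iio 0) = 0 := by
      rw [hμX, Measure.map_apply hX measurableSet_Iio]
      have he : X ⁻¹' Iio 0 = ∅ := by
        ext ω; simp [not_lt.2 (hXnn ω)]
      simp [he]
    have hIcc : μX (Iic t) = μX (Icc 0 t) := by
      apply le_antisymm
      · have hsub : Iic t ⊆ Icc 0 t ∪ Iio 0 := by
          intro x hx
          rcases le_or_gt 0 x with h | h
          · exact Or.inl ⟨h, hx⟩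
          · exact Or.inr h
        calc μX (Iic t) ≤ μX (Icc 0 t ∪ Iio 0) := measure_mono hsub
          _ ≤ μX (Icc 0 t) + μX (Iio 0) := measure_union_le _ _
          _ = μX (Icc 0 t) := by rw [hIio0, add_zero]
      · exact measure_mono Icc_subset_Iic_self
    rw [hkey, setIntegral_withDensity_eq_setIntegral_smul hfm _ measurableSet_Icc,
      setIntegral_congr_fun measurableSet_Icc hone, setIntegral_const, smul_eq_mul, mul_one,
      measureReal_def, ← hIcc, hF]
    rw [hμX, Measure.map_apply hX measurableSet_Iic]
    rfl
end

section
/- Let Λ be a cumulative hazard function of a cdf F with F(θ) < 1 for some θ, and let Λ^{(n)} be nondecreasing right-continuous functions with sup_{0 ≤ t ≤ θ}|Λ^{(n)}(t) − Λ(t)| → 0. Then ∑_{0 ≤ t ≤ θ, ΔF(t) > 0} (ΔF(t)/(1 − F(t))) |ΔΛ^{(n)}(t) − ΔΛ(t)| ≤ (F(θ)/(1 − F(θ))) · (sup_{0 ≤ t ≤ θ}|Λ^{(n)}(t) − Λ(t)| + sup_{0 ≤ t ≤ θ}|Λ^{(n)}(t−) − Λ(t−)|), and in particular this sum tends to 0.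 -/
open Filter Set Function
open scoped Topology ENNReal

/-- Finite sums of jumps of a monotone function over points in `(c, b)` are bounded by
`leftLim F b - F c`. -/
lemma jumpSum_lt_aux (F : ℝ → ℝ) (hF : Monotone F) (c : ℝ) :
    ∀ s : Finset ℝ, ∀ b : ℝ, c < b → (∀ t ∈ s, c < t ∧ t < b) →
      ∑ t ∈ s, (F t - leftLim F t) ≤ leftLim F b - F c := by
  classical
  intro s
  induction s using Finset.induction_on_max with
  | empty =>
    intro b hcb _
    simpa using hF.le_leftLim hcb
  | insert a s hlt ih =>
    intro b hcb hmem
    have ha := hmem a (Finset.mem_insert_self a s)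
    have hnot : a ∉ s := fun h => lt_irrefl a (hlt a h)
    rw [Finset.sum_insert hnot]
    have h1 : ∑ t ∈ s, (F t - leftLim F t) ≤ leftLim F a - F c :=
      ih a ha.1 (fun t ht => ⟨(hmem t (Finset.mem_insert_of_mem ht)).1, hlt t ht⟩)
    have h2 : F a ≤ leftLim F b := hF.le_leftLim ha.2
    have h3 : leftLim F a ≤ F a := hF.leftLim_le le_rfl
    linarith

/-- Finite sums of jumps of a monotone function vanishing on negatives, over points in
`[0, θ]`, are bounded by `F θ`. -/
lemma jumpSum_Icc_aux (F : ℝ → ℝ) (hF : Monotone F) (θ : ℝ) (hθ : 0 ≤ θ)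
    (hFneg : ∀ t < (0 : ℝ), F t = 0) (s : Finset ℝ) (hs : ∀ t ∈ s, t ∈ Icc (0 : ℝ) θ) :
    ∑ t ∈ s, (F t - leftLim F t) ≤ F θ := by
  classical
  have hll : leftLim F θ ≤ F θ := hF.leftLim_le le_rfl
  have hFneg1 : F (-1) = 0 := hFneg _ (by norm_num)
  by_cases hθs : θ ∈ s
  · rw [← Finset.sum_erase_add s _ hθs]
    have h1 : ∑ t ∈ s.erase θ, (F t - leftLim F t) ≤ leftLim F θ - F (-1) := by
      refine jumpSum_lt_aux F hF (-1) (s.erase θ) θ (by linarith) fun t ht => ?_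
      have htne : t ≠ θ := Finset.ne_of_mem_erase ht
      have htm := hs t (Finset.mem_of_mem_erase ht)
      exact ⟨by linarith [htm.1], lt_of_le_of_ne htm.2 htne⟩
    rw [hFneg1] at h1
    linarith
  · have h1 : ∑ t ∈ s, (F t - leftLim F t) ≤ leftLim F θ - F (-1) := by
      refine jumpSum_lt_aux F hF (-1) s θ (by linarith) fun t ht => ?_
      have htm := hs t ht
      have htne : t ≠ θ := fun h => hθs (h ▸ ht)
      exact ⟨by linarith [htm.1], lt_of_le_of_ne htm.2 htne⟩
    rw [hFneg1] at h1
    linarith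

/-- Elementwise bound by a (bounded) supremum over `Icc 0 θ`. -/
lemma le_biSup_Icc_aux {θ : ℝ} (f : ℝ → ℝ) {M : ℝ}
    (hM : ∀ t ∈ Icc (0 : ℝ) θ, f t ≤ M) (hM0 : 0 ≤ M) {t : ℝ} (ht : t ∈ Icc (0 : ℝ) θ) :
    f t ≤ ⨆ t ∈ Icc (0 : ℝ) θ, f t := by
  have hbdd : BddAbove (range fun u => ⨆ _ : u ∈ Icc (0 : ℝ) θ, f u) := by
    refine ⟨M, ?_⟩
    rintro x ⟨u, rfl⟩
    show (⨆ _ : u ∈ Icc (0 : ℝ) θ, f u) ≤ M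
    by_cases hu : u ∈ Icc (0 : ℝ) θ
    · rw [ciSup_pos hu]; exact hM u hu
    · haveI : IsEmpty (u ∈ Icc (0 : ℝ) θ) := ⟨hu⟩
      rw [Real.iSup_of_isEmpty]
      exact hM0
  calc f t = ⨆ _ : t ∈ Icc (0 : ℝ) θ, f t :=
      (ciSup_pos (p := t ∈ Icc (0 : ℝ) θ) (f := fun _ => f t) ht).symm
    _ ≤ ⨆ u ∈ Icc (0 : ℝ) θ, f u := le_ciSup hbdd t

/-- jump-sum estimate from the proof of Theorem 3.3. For a cdf `F`
(of a nonnegative variable) with `F(θ) < 1` and nondecreasing `Λⁿ, Λ` vanishing on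
`(−∞, 0)` with `sup_{[0,θ]} |Λⁿ − Λ| → 0`, the weighted sum of jump differences over the
jump points of `F` in `[0, θ]` is bounded by
`(F(θ)/(1 − F(θ))) (sup |Λⁿ − Λ| + sup |Λⁿ(·−) − Λ(·−)|)`, and hence tends to `0`. -/
theorem jump_sum_estimate
    (F Λ₀ : ℝ → ℝ) (Λn : ℕ → ℝ → ℝ) (θ : ℝ) (hθ : 0 ≤ θ)
    (hFmono : Monotone F) (hF0 : ∀ t, 0 ≤ F t) (hFneg : ∀ t < (0 : ℝ), F t = 0)
    (hFθ : F θ < 1)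
    (hΛmono : Monotone Λ₀) (hΛnmono : ∀ n, Monotone (Λn n))
    (hΛneg : ∀ t < (0 : ℝ), Λ₀ t = 0) (hΛnneg : ∀ n, ∀ t < (0 : ℝ), Λn n t = 0)
    (hconv : Tendsto (fun n : ℕ => ⨆ t ∈ Icc (0 : ℝ) θ, |Λn n t - Λ₀ t|) atTop (𝓝 0)) :
    (∀ n : ℕ,
      (∑' t : ℝ, if t ∈ Icc (0 : ℝ) θ then
          (F t - leftLim F t) / (1 - F t)
            * |(Λn n t - leftLim (Λn n) t) - (Λ₀ t - leftLim Λ₀ t)|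
        else 0)
      ≤ F θ / (1 - F θ)
        * ((⨆ t ∈ Icc (0 : ℝ) θ, |Λn n t - Λ₀ t|)
            + ⨆ t ∈ Icc (0 : ℝ) θ, |leftLim (Λn n) t - leftLim Λ₀ t|))
    ∧ Tendsto
      (fun n : ℕ => ∑' t : ℝ, if t ∈ Icc (0 : ℝ) θ then
          (F t - leftLim F t) / (1 - F t)
            * |(Λn n t - leftLim (Λn n) t) - (Λ₀ t - leftLim Λ₀ t)|
        else 0)
      atTop (𝓝 0) := by
  classical
  have hminus1 : (-1 : ℝ) < 0 := by norm_num
  have hFθpos : (0 : ℝ) < 1 - F θ := by linarith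
  set S1 : ℕ → ℝ := fun n => ⨆ t ∈ Icc (0 : ℝ) θ, |Λn n t - Λ₀ t| with hS1def
  set S2 : ℕ → ℝ := fun n => ⨆ t ∈ Icc (0 : ℝ) θ, |leftLim (Λn n) t - leftLim Λ₀ t|
    with hS2def
  set g : ℕ → ℝ → ℝ := fun n t => if t ∈ Icc (0 : ℝ) θ then
      (F t - leftLim F t) / (1 - F t)
        * |(Λn n t - leftLim (Λn n) t) - (Λ₀ t - leftLim Λ₀ t)|
    else 0 with hgdef
  -- basic nonnegativity/monotonicity facts
  have hΛ0nn : ∀ t, 0 ≤ t → 0 ≤ Λ₀ t := fun t ht => by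
    have := hΛmono (show (-1 : ℝ) ≤ t by linarith)
    rwa [hΛneg (-1) hminus1] at this
  have hΛnnn : ∀ n t, 0 ≤ t → 0 ≤ Λn n t := fun n t ht => by
    have := (hΛnmono n) (show (-1 : ℝ) ≤ t by linarith)
    rwa [hΛnneg n (-1) hminus1] at this
  have hll0 : ∀ t, 0 ≤ t → 0 ≤ leftLim Λ₀ t := fun t ht => by
    have := hΛmono.le_leftLim (show (-1 : ℝ) < t by linarith)
    rwa [hΛneg (-1) hminus1] at this
  have hlln : ∀ n t, 0 ≤ t → 0 ≤ leftLim (Λn n) t := fun n t ht => by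
    have := (hΛnmono n).le_leftLim (show (-1 : ℝ) < t by linarith)
    rwa [hΛnneg n (-1) hminus1] at this
  -- elementwise bounds by the sups
  have hb1 : ∀ n, ∀ t ∈ Icc (0 : ℝ) θ, |Λn n t - Λ₀ t| ≤ S1 n := by
    intro n t ht
    rw [hS1def]
    show |Λn n t - Λ₀ t| ≤ ⨆ u ∈ Icc (0 : ℝ) θ, |Λn n u - Λ₀ u|
    refine le_biSup_Icc_aux (fun u => |Λn n u - Λ₀ u|) (M := Λn n θ + Λ₀ θ) (fun u hu => ?_) ?_ ht
    · have h1 : 0 ≤ Λn n u := hΛnnn n u hu.1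
      have h2 : 0 ≤ Λ₀ u := hΛ0nn u hu.1
      have h3 : Λn n u ≤ Λn n θ := (hΛnmono n) hu.2
      have h4 : Λ₀ u ≤ Λ₀ θ := hΛmono hu.2
      rw [abs_le]; constructor <;> linarith
    · have := hΛnnn n θ hθ; have := hΛ0nn θ hθ; linarith
  have hb2 : ∀ n, ∀ t ∈ Icc (0 : ℝ) θ, |leftLim (Λn n) t - leftLim Λ₀ t| ≤ S2 n := by
    intro n t ht
    rw [hS2def]
    show |leftLim (Λn n) t - leftLim Λ₀ t| ≤ ⨆ u ∈ Icc (0 : ℝ) θ, |leftLim (Λn n) u - leftLim Λ₀ u|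
    refine le_biSup_Icc_aux (fun u => |leftLim (Λn n) u - leftLim Λ₀ u|) (M := Λn n θ + Λ₀ θ) (fun u hu => ?_) ?_ ht
    · have h1 : 0 ≤ leftLim (Λn n) u := hlln n u hu.1
      have h2 : 0 ≤ leftLim Λ₀ u := hll0 u hu.1
      have h3 : leftLim (Λn n) u ≤ Λn n θ :=
        ((hΛnmono n).leftLim_le le_rfl).trans ((hΛnmono n) hu.2)
      have h4 : leftLim Λ₀ u ≤ Λ₀ θ := (hΛmono.leftLim_le le_rfl).trans (hΛmono hu.2)
      rw [abs_le]; constructor <;> linarith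
    · have := hΛnnn n θ hθ; have := hΛ0nn θ hθ; linarith
  have hS1nn : ∀ n, 0 ≤ S1 n := fun n =>
    Real.iSup_nonneg fun t => Real.iSup_nonneg fun _ => abs_nonneg _
  have hS2nn : ∀ n, 0 ≤ S2 n := fun n =>
    Real.iSup_nonneg fun t => Real.iSup_nonneg fun _ => abs_nonneg _
  -- termwise bound
  have hterm : ∀ n t, g n t ≤ (S1 n + S2 n) / (1 - F θ)
      * (if t ∈ Icc (0 : ℝ) θ then F t - leftLim F t else 0) := by
    intro n t
    rw [hgdef]
    by_cases ht : t ∈ Icc (0 : ℝ) θ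
    · simp only [ht, if_true]
      have hΔF : 0 ≤ F t - leftLim F t := by
        have := hFmono.leftLim_le (le_refl t); linarith
      have hFt : F t ≤ F θ := hFmono ht.2
      have hD : |(Λn n t - leftLim (Λn n) t) - (Λ₀ t - leftLim Λ₀ t)|
          ≤ S1 n + S2 n := by
        have heq : (Λn n t - leftLim (Λn n) t) - (Λ₀ t - leftLim Λ₀ t)
            = (Λn n t - Λ₀ t) - (leftLim (Λn n) t - leftLim Λ₀ t) := by ring
        rw [heq]
        calc |(Λn n t - Λ₀ t) - (leftLim (Λn n) t - leftLim Λ₀ t)|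
            ≤ |Λn n t - Λ₀ t| + |leftLim (Λn n) t - leftLim Λ₀ t| := abs_sub _ _
          _ ≤ S1 n + S2 n := add_le_add (hb1 n t ht) (hb2 n t ht)
      have ha : (F t - leftLim F t) / (1 - F t) ≤ (F t - leftLim F t) / (1 - F θ) := by
        apply div_le_div_of_nonneg_left hΔF hFθpos (by linarith)
      calc (F t - leftLim F t) / (1 - F t)
            * |(Λn n t - leftLim (Λn n) t) - (Λ₀ t - leftLim Λ₀ t)|
          ≤ (F t - leftLim F t) / (1 - F θ) * (S1 n + S2 n) :=
            mul_le_mul ha hD (abs_nonneg _) (div_nonneg hΔF hFθpos.le)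
        _ = (S1 n + S2 n) / (1 - F θ) * (F t - leftLim F t) := by ring
    · simp [ht]
  have hg0 : ∀ n t, 0 ≤ g n t := by
    intro n t
    rw [hgdef]
    by_cases ht : t ∈ Icc (0 : ℝ) θ
    · simp only [ht, if_true]
      have hΔF : 0 ≤ F t - leftLim F t := by
        have := hFmono.leftLim_le (le_refl t); linarith
      have hFt : F t ≤ F θ := hFmono ht.2
      exact mul_nonneg (div_nonneg hΔF (by linarith)) (abs_nonneg _)
    · simp [ht]
  -- finite-sum bound
  have hfinsum : ∀ n, ∀ s : Finset ℝ,
      ∑ t ∈ s, g n t ≤ F θ / (1 - F θ) * (S1 n + S2 n) := by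
    intro n s
    have hC0 : 0 ≤ (S1 n + S2 n) / (1 - F θ) :=
      div_nonneg (by linarith [hS1nn n, hS2nn n]) hFθpos.le
    calc ∑ t ∈ s, g n t
        ≤ ∑ t ∈ s, (S1 n + S2 n) / (1 - F θ)
            * (if t ∈ Icc (0 : ℝ) θ then F t - leftLim F t else 0) :=
          Finset.sum_le_sum fun t _ => hterm n t
      _ = (S1 n + S2 n) / (1 - F θ)
          * ∑ t ∈ s, (if t ∈ Icc (0 : ℝ) θ then F t - leftLim F t else 0) := by
          rw [Finset.mul_sum]
      _ ≤ (S1 n + S2 n) / (1 - F θ) * F θ := by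
          refine mul_le_mul_of_nonneg_left ?_ hC0
          rw [← Finset.sum_filter]
          exact jumpSum_Icc_aux F hFmono θ hθ hFneg _
            fun t ht => (Finset.mem_filter.1 ht).2
      _ = F θ / (1 - F θ) * (S1 n + S2 n) := by ring
  have hsummable : ∀ n, Summable (g n) := fun n =>
    summable_of_sum_le (fun t => hg0 n t) (hfinsum n)
  have part1 : ∀ n, (∑' t, g n t) ≤ F θ / (1 - F θ) * (S1 n + S2 n) := fun n =>
    Summable.tsum_le_of_sum_le (hsummable n) (hfinsum n)
  refine ⟨part1, ?_⟩
  -- convergence of the left-limit sup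
  have hS2le : ∀ n, S2 n ≤ S1 n := by
    intro n
    refine Real.iSup_le (fun t => Real.iSup_le (fun ht => ?_) (hS1nn n)) (hS1nn n)
    rcases eq_or_lt_of_le ht.1 with h0 | h0
    · have hz : ∀ f : ℝ → ℝ, Monotone f → (∀ u < (0 : ℝ), f u = 0) →
          leftLim f (0 : ℝ) = 0 := by
        intro f hf hfneg
        refine tendsto_nhds_unique (hf.tendsto_leftLim 0) ?_
        have hev : ∀ᶠ u in 𝓝[<] (0 : ℝ), f u = 0 := by
          filter_upwards [self_mem_nhdsWithin] with u hu using hfneg u hu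
        exact Tendsto.congr' (by filter_upwards [hev] with u hu using hu.symm)
          tendsto_const_nhds
      rw [← h0, hz (Λn n) (hΛnmono n) (hΛnneg n), hz Λ₀ hΛmono hΛneg]
      simpa using hS1nn n
    · have hT := ((hΛnmono n).tendsto_leftLim t).sub (hΛmono.tendsto_leftLim t)
      refine le_of_tendsto hT.abs ?_
      filter_upwards [Ioo_mem_nhdsLT h0] with u hu
      exact hb1 n u ⟨hu.1.le, hu.2.le.trans ht.2⟩
  have hS2conv : Tendsto S2 atTop (𝓝 0) := squeeze_zero hS2nn hS2le hconv
  have hBconv : Tendsto (fun n => F θ / (1 - F θ) * (S1 n + S2 n)) atTop (𝓝 0) := by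
    have := (hconv.add hS2conv).const_mul (F θ / (1 - F θ))
    simpa using this
  exact squeeze_zero (fun n => tsum_nonneg (hg0 n)) part1 hBconv
end
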